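/- arXiv:2406.14332 — 8 statements merged into one kernel-verified Lean document; each statement's English description precedes it below -/
import Mathlib

section
/- Let D be a digraph, T a directed trail from u₁ to u_h in D, and x a vertex of D. If D contains no directed trail from u₁ to u_h with vertex set V(T) ∪ {x}, then the number of arcs between x and vertices of T (counting both directions) is at most |V(T)|. -/
/-- A directed walk: consecutive vertices are joined by arcs. -/
def IsDiwalk {V : Type*} (A : V → V → Prop) : List V → Prop
  | [] => True
  | [_] => True
  | a :: b :: l => A a b ∧ IsDiwalk A (b :: l)

/-- The list of arcs traversed by a walk given as a vertex list. -/
def arcList {V : Type*} (l : List V) : List (V × V) := l.zip l.tail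

/-- A directed trail: a directed walk with no repeated arcs. -/
def IsDitrail {V : Type*} (A : V → V → Prop) (l : List V) : Prop :=
  IsDiwalk A l ∧ (arcList l).Nodup

/-- A closed directed trail: a directed trail whose first and last vertices coincide. -/
def IsClosedDitrail {V : Type*} (A : V → V → Prop) (l : List V) : Prop :=
  IsDitrail A l ∧ l.head? = l.getLast?

/-- A directed path from `u` to `v` (no repeated vertices). -/
def IsDipathFrom {V : Type*} (A : V → V → Prop) (u v : V) (l : List V) : Prop :=
  IsDiwalk A l ∧ l.Nodup ∧ l.head? = some u ∧ l.getLast? = some v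

/-- Reachability by a directed path. -/
def DiReach {V : Type*} (A : V → V → Prop) (u v : V) : Prop :=
  ∃ l, IsDipathFrom A u v l

lemma arcList_cons_cons {V : Type*} (a b : V) (l : List V) :
    arcList (a :: b :: l) = (a, b) :: arcList (b :: l) := rfl

lemma diwalk_iff {V : Type*} (A : V → V → Prop) (l : List V) :
    IsDiwalk A l ↔ ∀ p ∈ arcList l, A p.1 p.2 := by
  induction l with
  | nil => simp [IsDiwalk, arcList]
  | cons a l ih =>
    cases l with
    | nil => simp [IsDiwalk, arcList]
    | cons b l =>
      rw [arcList_cons_cons]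
      simp only [IsDiwalk, ih, List.mem_cons]
      constructor
      · rintro ⟨hab, h⟩ p (rfl | hp)
        · exact hab
        · exact h p hp
      · intro h
        exact ⟨h (a, b) (Or.inl rfl), fun p hp => h p (Or.inr hp)⟩

lemma mem_of_mem_arcList {V : Type*} {l : List V} {p : V × V} (h : p ∈ arcList l) :
    p.1 ∈ l ∧ p.2 ∈ l := by
  have h' : (p.1, p.2) ∈ l.zip l.tail := h
  obtain ⟨h1, h2⟩ := List.of_mem_zip h'
  exact ⟨h1, List.mem_of_mem_tail h2⟩

lemma arcList_split {V : Type*} (L : List V) (m : V) (M : List V) :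
    arcList (L ++ m :: M) = arcList (L ++ [m]) ++ arcList (m :: M) := by
  induction L with
  | nil => simp [arcList]
  | cons a L ih =>
    cases L with
    | nil => simp [arcList]
    | cons b L' =>
      simp only [List.cons_append, arcList_cons_cons] at *
      rw [ih]

lemma getLast?_append_cons {V : Type*} (L : List V) (m : V) (M : List V) :
    (L ++ m :: M).getLast? = (m :: M).getLast? := by
  rw [List.getLast?_append, List.getLast?_eq_getLast (l := m :: M) (by simp)]
  rfl

/-- if `D` has no `(u₁,u_h)`-ditrail with vertex set `V(T) ∪ {x}`,
then the number of arcs between `x` and `V(T)` (both directions) is at most `|V(T)|`. -/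
theorem stmt_0 {V : Type*} [Fintype V] (A : V → V → Prop) (hirr : ∀ v, ¬ A v v)
    (T : List V) (u₁ uh x : V)
    (hT : IsDitrail A T) (hhead : T.head? = some u₁) (hlast : T.getLast? = some uh)
    (hno : ¬ ∃ T' : List V, IsDitrail A T' ∧ T'.head? = some u₁ ∧
      T'.getLast? = some uh ∧ {v | v ∈ T'} = {v | v ∈ T} ∪ {x}) :
    {t | t ∈ T ∧ A x t}.ncard + {t | t ∈ T ∧ A t x}.ncard ≤ {v | v ∈ T}.ncard := by
  by_contra hlt
  push_neg at hlt
  -- x is not a vertex of T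
  have hxT : x ∉ T := by
    intro hx
    exact hno ⟨T, hT, hhead, hlast, by
      ext v
      simp only [Set.mem_setOf_eq, Set.mem_union, Set.mem_singleton_iff]
      constructor
      · exact Or.inl
      · rintro (h | rfl)
        exacts [h, hx]⟩
  -- pigeonhole: some t with arcs in both directions
  set S1 : Set V := {t | t ∈ T ∧ A x t} with hS1
  set S2 : Set V := {t | t ∈ T ∧ A t x} with hS2
  have hsub : S1 ∪ S2 ⊆ {v | v ∈ T} := by
    rintro v (hv | hv) <;> exact hv.1
  have hkey : (S1 ∩ S2).Nonempty := by
    rw [Set.nonempty_iff_ne_empty]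
    intro hemp
    have h1 := Set.ncard_union_add_ncard_inter S1 S2 (Set.toFinite _) (Set.toFinite _)
    rw [hemp, Set.ncard_empty, add_zero] at h1
    have h2 : (S1 ∪ S2).ncard ≤ {v | v ∈ T}.ncard :=
      Set.ncard_le_ncard hsub (Set.toFinite _)
    omega
  obtain ⟨t, ht1, ht2⟩ := hkey
  have htT : t ∈ T := ht1.1
  have hxt : A x t := ht1.2
  have htx : A t x := ht2.2
  have htnex : t ≠ x := by intro h; rw [h] at htx; exact hirr x htx
  obtain ⟨L, R, hLR⟩ := List.append_of_mem htT
  -- the enlarged trail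
  refine absurd ?_ hno
  refine ⟨L ++ t :: x :: t :: R, ⟨?_, ?_⟩, ?_, ?_, ?_⟩
  · -- walk
    rw [diwalk_iff]
    intro p hp
    rw [arcList_split L t (x :: t :: R), arcList_cons_cons, arcList_cons_cons] at hp
    rcases List.mem_append.1 hp with hp | hp
    · have : p ∈ arcList T := by
        rw [hLR, arcList_split]; exact List.mem_append.2 (Or.inl hp)
      exact (diwalk_iff A T).1 hT.1 p this
    · simp only [List.mem_cons] at hp
      rcases hp with rfl | rfl | hp
      · exact htx
      · exact hxt
      · have : p ∈ arcList T := by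
          rw [hLR, arcList_split]; exact List.mem_append.2 (Or.inr hp)
        exact (diwalk_iff A T).1 hT.1 p this
  · -- nodup arcs
    have hnd : (arcList T).Nodup := hT.2
    rw [hLR, arcList_split] at hnd
    rw [List.nodup_append] at hnd
    obtain ⟨hnd1, hnd2, hdisj⟩ := hnd
    have hxtR : x ∉ t :: R := by
      intro hx; apply hxT; rw [hLR]; exact List.mem_append.2 (Or.inr hx)
    have hxLt : x ∉ L ++ [t] := by
      intro hx
      apply hxT; rw [hLR]
      rcases List.mem_append.1 hx with hx | hx
      · exact List.mem_append.2 (Or.inl hx)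
      · simp at hx; exact absurd hx.symm htnex
    rw [arcList_split L t (x :: t :: R), arcList_cons_cons, arcList_cons_cons,
      List.nodup_append]
    refine ⟨hnd1, ?_, ?_⟩
    · refine List.Nodup.cons ?_ (List.Nodup.cons ?_ hnd2)
      · simp only [List.mem_cons]
        rintro (h | h)
        · exact htnex (congrArg Prod.fst h)
        · exact hxtR (mem_of_mem_arcList h).2
      · intro h
        exact hxtR (mem_of_mem_arcList h).1
    · intro p hpL q hpR hpq; subst hpq
      simp only [List.mem_cons] at hpR
      rcases hpR with rfl | rfl | hpR
      · exact hxLt (mem_of_mem_arcList hpL).2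
      · exact hxLt (mem_of_mem_arcList hpL).1
      · exact hdisj p hpL p hpR rfl
  · -- head
    have h1 : (L ++ t :: x :: t :: R).head? = L.head?.or (some t) := by
      rw [List.head?_append]; rfl
    have h2 : T.head? = L.head?.or (some t) := by
      rw [hLR, List.head?_append]; rfl
    rw [h1, ← h2, hhead]
  · -- last
    have h1 : (L ++ t :: x :: t :: R).getLast? = (t :: R).getLast? := by
      have he : L ++ t :: x :: t :: R = (L ++ [t, x]) ++ t :: R := by simp
      rw [he]
      exact getLast?_append_cons _ t R
    have h2 : T.getLast? = (t :: R).getLast? := by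
      rw [hLR]
      exact getLast?_append_cons L t R
    rw [h1, ← h2, hlast]
  · -- vertex set
    ext v
    simp only [Set.mem_setOf_eq, Set.mem_union, Set.mem_singleton_iff, hLR,
      List.mem_append, List.mem_cons]
    tauto
end

section
/- Let G be a graph and M a matching in G with |M| = m > 0. Suppose X = V(G) − V(M) satisfies |X| ≥ 2, and every vertex x ∈ X has degree d(x) ≥ 2m − 1. If some vertex x' ∈ X has d(x') ≥ 2m + 1, then M is not a maximum matching of G. -/
/-- if all `M`-uncovered vertices have degree ≥ 2m-1 and some uncovered
vertex has degree ≥ 2m+1, then `M` is not a maximum matching. -/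
theorem stmt_3 {V : Type*} [Fintype V] (G : SimpleGraph V) [DecidableRel G.Adj]
    (M : G.Subgraph) (hM : M.IsMatching) (m : ℕ) (hm : M.edgeSet.ncard = m)
    (hpos : 0 < m) (hX : 2 ≤ (M.vertsᶜ).ncard)
    (hdeg : ∀ x ∈ M.vertsᶜ, 2 * m - 1 ≤ G.degree x)
    (x' : V) (hx' : x' ∈ M.vertsᶜ) (hdx' : 2 * m + 1 ≤ G.degree x') :
    ∃ M' : G.Subgraph, M'.IsMatching ∧ M.edgeSet.ncard < M'.edgeSet.ncard := by
  classical
  -- the function sending a covered vertex to its matching edge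
  set f : V → Sym2 V := fun v =>
    if h : v ∈ M.verts then (hM.toEdge ⟨v, h⟩ : Sym2 V) else s(v, v) with hf
  have hmem : ∀ v (h : v ∈ M.verts), f v ∈ M.edgeSet ∧ v ∈ f v := by
    intro v h
    simp only [hf, dif_pos h]
    obtain ⟨w, hw, -⟩ := hM h
    rw [hM.toEdge_eq_of_adj hw]
    exact ⟨hw, Sym2.mem_mk_left v w⟩
  -- |M.verts| ≤ 2m
  have hvcard : M.verts.toFinset.card ≤ 2 * m := by
    have := Finset.card_le_mul_card_image_of_maps_to
      (f := f) (s := M.verts.toFinset) (t := M.edgeSet.toFinite.toFinset)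
      (fun a ha => by
        rw [Set.Finite.mem_toFinset]
        exact (hmem a (Set.mem_toFinset.mp ha)).1) 2
      (fun b hb => by
        induction b with
        | h u w =>
          have : (M.verts.toFinset.filter fun a => f a = s(u, w)) ⊆ {u, w} := by
            intro a ha
            simp only [Finset.mem_filter] at ha
            have := (hmem a (Set.mem_toFinset.mp ha.1)).2
            rw [ha.2] at this
            simpa [Finset.mem_insert] using this
          calc _ ≤ ({u, w} : Finset V).card := Finset.card_le_card this
            _ ≤ 2 := Finset.card_insert_le _ _ |>.trans (by simp))
    rw [Set.ncard_eq_toFinset_card _ M.edgeSet.toFinite] at hm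
    omega
  -- find a neighbor of x' not covered by M
  have hcard : M.verts.toFinset.card < (G.neighborFinset x').card := by
    rw [SimpleGraph.card_neighborFinset_eq_degree]; omega
  have hns : ¬ G.neighborFinset x' ⊆ M.verts.toFinset :=
    fun h => absurd (Finset.card_le_card h) (by omega)
  obtain ⟨y, hy, hyM⟩ := Finset.not_subset.mp hns
  rw [SimpleGraph.mem_neighborFinset] at hy
  rw [Set.mem_toFinset] at hyM
  have hx'M : x' ∉ M.verts := hx'
  -- the augmented matching
  refine ⟨M ⊔ G.subgraphOfAdj hy, ?_, ?_⟩
  · refine hM.sup (SimpleGraph.Subgraph.IsMatching.subgraphOfAdj hy) ?_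
    rw [hM.support_eq_verts, SimpleGraph.support_subgraphOfAdj]
    rw [Set.disjoint_right]
    rintro a (rfl | rfl) <;> assumption
  · rw [SimpleGraph.Subgraph.edgeSet_sup, SimpleGraph.edgeSet_subgraphOfAdj]
    have hdisj : Disjoint M.edgeSet {s(x', y)} := by
      rw [Set.disjoint_singleton_right]
      intro h
      exact hx'M (M.edge_vert (SimpleGraph.Subgraph.mem_edgeSet.mp h))
    rw [Set.ncard_union_eq hdisj M.edgeSet.toFinite (Set.finite_singleton _),
      Set.ncard_singleton]
    omega
end

section
/- Let H be a digraph whose underlying graph has a maximum matching M with |M| = m > 0, let X be the set of vertices of H not covered by M, and suppose |X| ≥ 2 and δ⁰(H) ≥ m, where δ⁰ is the minimum of all in-degrees and out-degrees. Then every vertex x ∈ X satisfies d⁺(x) = d⁻(x) = m. -/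
/-- The underlying graph of a digraph given by its arc relation. -/
def UGraph {V : Type*} (A : V → V → Prop) : SimpleGraph V where
  Adj a b := a ≠ b ∧ (A a b ∨ A b a)
  symm := ⟨fun a b h => ⟨h.1.symm, h.2.symm⟩⟩
  loopless := ⟨fun a h => h.1 rfl⟩

open SimpleGraph

section Aux

variable {V : Type*} [Fintype V] {G : SimpleGraph V} {M : G.Subgraph}

/-- A vertex adjacent to an uncovered vertex is covered by a maximum matching. -/
lemma aux_mem_verts (hM : M.IsMatching)
    (hmax : ∀ M' : G.Subgraph, M'.IsMatching → M'.edgeSet.ncard ≤ M.edgeSet.ncard)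
    {x w : V} (hx : x ∉ M.verts) (hxw : G.Adj x w) : w ∈ M.verts := by
  by_contra hw
  have hd : Disjoint M.support (G.subgraphOfAdj hxw).support := by
    rw [hM.support_eq_verts]
    refine Set.disjoint_left.mpr fun v hv hv' => ?_
    have h2 := (G.subgraphOfAdj hxw).support_subset_verts hv'
    simp only [subgraphOfAdj_verts, Set.mem_insert_iff, Set.mem_singleton_iff] at h2
    rcases h2 with rfl | rfl
    · exact hx hv
    · exact hw hv
  have hm' := hM.sup (Subgraph.IsMatching.subgraphOfAdj hxw) hd
  have he : (M ⊔ G.subgraphOfAdj hxw).edgeSet = insert s(x, w) M.edgeSet := by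
    rw [Subgraph.edgeSet_sup, edgeSet_subgraphOfAdj, Set.union_singleton]
  have hnot : s(x, w) ∉ M.edgeSet := fun h => hx (M.edge_vert h)
  have hle := hmax _ hm'
  rw [he, Set.ncard_insert_of_notMem hnot (Set.toFinite _)] at hle
  omega

/-- There is no augmenting path of length three. -/
lemma aux_noaug (hM : M.IsMatching)
    (hmax : ∀ M' : G.Subgraph, M'.IsMatching → M'.edgeSet.ncard ≤ M.edgeSet.ncard)
    {x y w p : V} (hx : x ∉ M.verts) (hy : y ∉ M.verts) (hxy : x ≠ y)
    (hxw : G.Adj x w) (hwp : M.Adj w p) (hpy : G.Adj p y) : False := by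
  classical
  have hwv : w ∈ M.verts := M.edge_vert hwp
  have hpv : p ∈ M.verts := M.edge_vert hwp.symm
  have hwp' : w ≠ p := (M.adj_sub hwp).ne
  have hxp : x ≠ p := fun h => hx (h ▸ hpv)
  have hxw' : x ≠ w := hxw.ne
  have hyw : y ≠ w := fun h => hy (h ▸ hwv)
  have hyp : y ≠ p := hpy.ne'
  set D := M.deleteVerts {w, p} with hD
  -- D is a matching
  have hDM : D.IsMatching := by
    intro v hv
    rw [hD, Subgraph.deleteVerts_verts] at hv
    obtain ⟨u, hu, huq⟩ := hM hv.1
    have huwp : u ∉ ({w, p} : Set V) := by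
      intro hu'
      simp only [Set.mem_insert_iff, Set.mem_singleton_iff] at hu'
      rcases hu' with rfl | rfl
      · exact hv.2 (by simp [(hM hwv).unique hu.symm hwp])
      · exact hv.2 (by simp [(hM hpv).unique hu.symm hwp.symm])
    refine ⟨u, ?_, ?_⟩
    · exact Subgraph.deleteVerts_adj.mpr ⟨hv.1, hv.2, M.edge_vert hu.symm, huwp, hu⟩
    · intro z hz
      exact huq z (Subgraph.deleteVerts_adj.mp hz).2.2.2.2
  -- the two new matching edges
  have hm2 : ((G.subgraphOfAdj hxw) ⊔ (G.subgraphOfAdj hpy)).IsMatching := by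
    refine (Subgraph.IsMatching.subgraphOfAdj hxw).sup
      (Subgraph.IsMatching.subgraphOfAdj hpy) ?_
    refine Set.disjoint_left.mpr fun v hv hv' => ?_
    have h1 := (G.subgraphOfAdj hxw).support_subset_verts hv
    have h2 := (G.subgraphOfAdj hpy).support_subset_verts hv'
    simp only [subgraphOfAdj_verts, Set.mem_insert_iff, Set.mem_singleton_iff] at h1 h2
    rcases h1 with rfl | rfl <;> rcases h2 with rfl | rfl
    · exact hxp rfl
    · exact hxy rfl
    · exact hwp' rfl.symm
    · exact hyw rfl.symm
  -- the improved matching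
  have hm' : (D ⊔ ((G.subgraphOfAdj hxw) ⊔ (G.subgraphOfAdj hpy))).IsMatching := by
    refine hDM.sup hm2 ?_
    refine Set.disjoint_left.mpr fun v hv hv' => ?_
    have h1 := D.support_subset_verts hv
    rw [hD, Subgraph.deleteVerts_verts] at h1
    have h2 := Subgraph.support_subset_verts _ hv'
    rw [Subgraph.verts_sup, subgraphOfAdj_verts, subgraphOfAdj_verts] at h2
    simp only [Set.mem_union, Set.mem_insert_iff, Set.mem_singleton_iff] at h2
    rcases h2 with (rfl | rfl) | (rfl | rfl)
    · exact hx h1.1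
    · exact h1.2 (by simp)
    · exact h1.2 (by simp)
    · exact hy h1.1
  -- edge set of D
  have hDe : D.edgeSet = M.edgeSet \ {s(w, p)} := by
    ext e
    refine Sym2.ind (fun a b => ?_) e
    simp only [Subgraph.mem_edgeSet, Set.mem_diff, Set.mem_singleton_iff, hD,
      Subgraph.deleteVerts_adj]
    constructor
    · rintro ⟨-, ha, -, hb, hab⟩
      simp only [Set.mem_insert_iff, Set.mem_singleton_iff, not_or] at ha hb
      refine ⟨hab, fun h => ?_⟩
      rw [Sym2.eq_iff] at h
      rcases h with ⟨rfl, rfl⟩ | ⟨rfl, rfl⟩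
      · exact ha.1 rfl
      · exact ha.2 rfl
    · rintro ⟨hab, hne⟩
      have hav : a ∈ M.verts := M.edge_vert hab
      have hbv : b ∈ M.verts := M.edge_vert hab.symm
      have ha : a ∉ ({w, p} : Set V) := by
        intro h
        simp only [Set.mem_insert_iff, Set.mem_singleton_iff] at h
        rcases h with rfl | rfl
        · exact hne (by rw [(hM hwv).unique hab hwp])
        · exact hne (by rw [(hM hpv).unique hab hwp.symm, Sym2.eq_swap])
      have hb : b ∉ ({w, p} : Set V) := by
        intro h
        simp only [Set.mem_insert_iff, Set.mem_singleton_iff] at h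
        rcases h with rfl | rfl
        · exact hne (by rw [(hM hwv).unique hab.symm hwp, Sym2.eq_swap])
        · exact hne (by rw [(hM hpv).unique hab.symm hwp.symm])
      exact ⟨hav, ha, hbv, hb, hab⟩
  -- count edges
  have hse : (D ⊔ ((G.subgraphOfAdj hxw) ⊔ (G.subgraphOfAdj hpy))).edgeSet
      = insert s(x, w) (insert s(p, y) (M.edgeSet \ {s(w, p)})) := by
    rw [Subgraph.edgeSet_sup, Subgraph.edgeSet_sup, hDe, edgeSet_subgraphOfAdj,
      edgeSet_subgraphOfAdj]
    rw [Set.union_comm ({s(x, w)} : Set (Sym2 V)) {s(p, y)}, ← Set.union_assoc,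
      Set.union_singleton, Set.union_singleton]
  have hpyne : s(p, y) ∉ M.edgeSet \ {s(w, p)} := fun h => hy (M.edge_vert (Subgraph.mem_edgeSet.mp h.1).symm)
  have hxwne : s(x, w) ∉ insert s(p, y) (M.edgeSet \ {s(w, p)}) := by
    intro h
    rcases h with h | h
    · rw [Sym2.eq_iff] at h
      rcases h with ⟨rfl, rfl⟩ | ⟨rfl, rfl⟩
      · exact hxp rfl
      · exact hxy rfl
    · exact hx (M.edge_vert (Subgraph.mem_edgeSet.mp h.1))
  have hwpe : s(w, p) ∈ M.edgeSet := Subgraph.mem_edgeSet.mpr hwp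
  have hpos : 1 ≤ M.edgeSet.ncard := (Set.ncard_pos (Set.toFinite _)).mpr ⟨_, hwpe⟩
  have hle := hmax _ hm'
  rw [hse, Set.ncard_insert_of_notMem hxwne (Set.Finite.insert _ ((Set.toFinite _).diff)),
    Set.ncard_insert_of_notMem hpyne ((Set.toFinite _).diff),
    Set.ncard_diff_singleton_of_mem hwpe] at hle
  omega

/-- A matching covers at most twice as many vertices as it has edges. -/
lemma aux_verts_card (hM : M.IsMatching) :
    M.verts.ncard ≤ 2 * M.edgeSet.ncard := by
  classical
  have hV : M.verts.Finite := Set.toFinite _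
  have hE : M.edgeSet.Finite := Set.toFinite _
  rw [Set.ncard_eq_toFinset_card _ hV, Set.ncard_eq_toFinset_card _ hE]
  set f : V → Sym2 V := fun v => s(v, if h : v ∈ M.verts then (hM h).choose else v) with hf
  refine Finset.card_le_mul_card_image_of_maps_to (f := f) ?_ 2 ?_
  · intro v hv
    rw [Set.Finite.mem_toFinset] at hv
    rw [Set.Finite.mem_toFinset]
    simp only [hf, dif_pos hv]
    exact Subgraph.mem_edgeSet.mpr (hM hv).choose_spec.1
  · intro e he
    refine Sym2.ind (fun a b => ?_) e
    have hsub : {v ∈ hV.toFinset | f v = s(a, b)} ⊆ ({a, b} : Finset V) := by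
      intro v hv
      rw [Finset.mem_filter] at hv
      have := hv.2
      rw [hf] at this
      rw [Sym2.eq_iff] at this
      simp only [Finset.mem_insert, Finset.mem_singleton]
      rcases this with ⟨h1, -⟩ | ⟨h1, -⟩
      · exact Or.inl h1
      · exact Or.inr h1
    calc {v ∈ hV.toFinset | f v = s(a, b)}.card ≤ ({a, b} : Finset V).card :=
          Finset.card_le_card hsub
      _ ≤ 2 := Finset.card_insert_le a {b} |>.trans (by simp)

end Aux

/-- with a maximum matching `M` of size `m`, uncovered set of size ≥ 2
and minimum semi-degree ≥ m, every uncovered vertex has in- and out-degree exactly `m`. -/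
theorem stmt_4 {V : Type*} [Fintype V] (A : V → V → Prop) (hirr : ∀ v, ¬ A v v)
    (M : (UGraph A).Subgraph) (hM : M.IsMatching)
    (hmax : ∀ M' : (UGraph A).Subgraph, M'.IsMatching →
      M'.edgeSet.ncard ≤ M.edgeSet.ncard)
    (m : ℕ) (hm : M.edgeSet.ncard = m) (hpos : 0 < m)
    (hX : 2 ≤ (M.vertsᶜ).ncard)
    (hdel : ∀ v : V, m ≤ {w | A v w}.ncard ∧ m ≤ {w | A w v}.ncard) :
    ∀ x ∈ M.vertsᶜ, {w | A x w}.ncard = m ∧ {w | A w x}.ncard = m := by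
  classical
  intro x hx
  have hx' : x ∉ M.verts := hx
  obtain ⟨y, hy, hyx⟩ := Set.exists_ne_of_one_lt_ncard (s := M.vertsᶜ) (by omega) x
  have hy' : y ∉ M.verts := hy
  have hxy : x ≠ y := hyx.symm
  set Nx := {w | (UGraph A).Adj x w} with hNx
  set Ny := {w | (UGraph A).Adj y w} with hNy
  have hAxNx : {w | A x w} ⊆ Nx := fun w hw => ⟨fun h => hirr w (h ▸ hw), Or.inl hw⟩
  have hAxNx' : {w | A w x} ⊆ Nx := fun w hw => ⟨fun h => hirr w (h ▸ hw), Or.inr hw⟩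
  have hAyNy : {w | A y w} ⊆ Ny := fun w hw => ⟨fun h => hirr w (h ▸ hw), Or.inl hw⟩
  have hNxV : Nx ⊆ M.verts := fun w hw => aux_mem_verts hM hmax hx' hw
  have hNyV : Ny ⊆ M.verts := fun w hw => aux_mem_verts hM hmax hy' hw
  -- the partner map
  set p : V → V := fun v => if h : v ∈ M.verts then (hM h).choose else v with hp
  have hpadj : ∀ v ∈ M.verts, M.Adj v (p v) := by
    intro v hv
    simp only [hp, dif_pos hv]
    exact (hM hv).choose_spec.1
  have hpinj : Set.InjOn p M.verts := by
    intro v1 hv1 v2 hv2 h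
    have h1 := hpadj v1 hv1
    have h2 := hpadj v2 hv2
    rw [h] at h1
    have hz : p v2 ∈ M.verts := M.edge_vert h2.symm
    exact (hM hz).unique h1.symm h2.symm
  -- p '' Nx is disjoint from Ny
  have hdisj : Disjoint (p '' Nx) Ny := by
    refine Set.disjoint_left.mpr fun z hz hz' => ?_
    obtain ⟨w, hw, rfl⟩ := hz
    exact aux_noaug hM hmax hx' hy' hxy hw (hpadj w (hNxV hw)) (hz'.symm : (UGraph A).Adj (p w) y)
  have hpNxV : p '' Nx ⊆ M.verts := by
    rintro z ⟨w, hw, rfl⟩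
    exact M.edge_vert (hpadj w (hNxV hw)).symm
  -- counting
  have hcard : (p '' Nx).ncard + Ny.ncard ≤ 2 * m := by
    rw [← Set.ncard_union_eq hdisj (Set.toFinite _) (Set.toFinite _)]
    calc (p '' Nx ∪ Ny).ncard ≤ M.verts.ncard :=
          Set.ncard_le_ncard (Set.union_subset hpNxV hNyV) (Set.toFinite _)
      _ ≤ 2 * M.edgeSet.ncard := aux_verts_card hM
      _ = 2 * m := by rw [hm]
  have himg : (p '' Nx).ncard = Nx.ncard :=
    Set.ncard_image_of_injOn (hpinj.mono hNxV)
  have hNym : m ≤ Ny.ncard :=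
    le_trans (hdel y).1 (Set.ncard_le_ncard hAyNy (Set.toFinite _))
  have hNxm : Nx.ncard ≤ m := by omega
  constructor
  · exact le_antisymm (le_trans (Set.ncard_le_ncard hAxNx (Set.toFinite _)) hNxm) (hdel x).1
  · exact le_antisymm (le_trans (Set.ncard_le_ncard hAxNx' (Set.toFinite _)) hNxm) (hdel x).2
end

section
/- Let H be a digraph with maximum matching M of its underlying graph, |M| = m > 0, X the set of M-uncovered vertices, |X| ≥ 3, and δ⁰(H) ≥ m. Then for every edge e = [u,v] ∈ M there is exactly one endpoint v(e) ∈ {u,v} such that (v(e),x) and (x,v(e)) are arcs of H for every x ∈ X, while the other endpoint u(e) has no neighbours in X. -/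
open SimpleGraph in
lemma matching_verts_ncard_le {V : Type*} [Fintype V] {G : SimpleGraph V} {M : G.Subgraph}
    (hM : M.IsMatching) : M.verts.ncard ≤ 2 * M.edgeSet.ncard := by
  classical
  have hvfin : M.verts.Finite := Set.toFinite _
  have hefin : M.edgeSet.Finite := Set.toFinite _
  have hpart : ∀ w : V, ∃ w' : V, w ∈ M.verts → M.Adj w w' := by
    intro w
    by_cases hw : w ∈ M.verts
    · obtain ⟨w', hw', -⟩ := hM hw
      exact ⟨w', fun _ => hw'⟩
    · exact ⟨w, fun h => absurd h hw⟩
  choose p hp using hpart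
  set f : V → Sym2 V := fun v => s(v, p v) with hf
  have key : hvfin.toFinset.card ≤ 2 * (hvfin.toFinset.image f).card := by
    apply Finset.card_le_mul_card_image
    intro e he
    obtain ⟨a, b⟩ := e
    have hsub : (hvfin.toFinset.filter fun x => f x = s(a, b)) ⊆ {a, b} := by
      intro x hx
      simp only [Finset.mem_filter] at hx
      have : x ∈ f x := by simp [hf]
      rw [hx.2] at this
      simpa using this
    calc (hvfin.toFinset.filter fun x => f x = s(a, b)).card
        ≤ ({a, b} : Finset V).card := Finset.card_le_card hsub
      _ ≤ 2 := by
          apply le_trans (Finset.card_insert_le _ _)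
          simp
  have himg : hvfin.toFinset.image f ⊆ hefin.toFinset := by
    intro e he
    simp only [Finset.mem_image, Set.Finite.mem_toFinset] at he ⊢
    obtain ⟨w, hw, rfl⟩ := he
    exact hp w hw
  have h1 : M.verts.ncard = hvfin.toFinset.card := Set.ncard_eq_toFinset_card _ hvfin
  have h2 : (hvfin.toFinset.image f).card ≤ M.edgeSet.ncard := by
    rw [Set.ncard_eq_toFinset_card _ hefin]
    exact Finset.card_le_card himg
  omega

open SimpleGraph in
lemma matching_indep {V : Type*} [Fintype V] {G : SimpleGraph V} {M : G.Subgraph}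
    (hM : M.IsMatching)
    (hmax : ∀ M' : G.Subgraph, M'.IsMatching → M'.edgeSet.ncard ≤ M.edgeSet.ncard)
    {x y : V} (hx : x ∉ M.verts) (hy : y ∉ M.verts) (hadj : G.Adj x y) : False := by
  classical
  have hdisj : Disjoint M.support (G.subgraphOfAdj hadj).support := by
    rw [support_subgraphOfAdj, Set.disjoint_left]
    intro a ha hc
    have haM : a ∈ M.verts := M.support_subset_verts ha
    simp only [Set.mem_insert_iff, Set.mem_singleton_iff] at hc
    rcases hc with h | h
    · exact hx (by rw [← h]; exact haM)
    · exact hy (by rw [← h]; exact haM)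
  have hM' : (M ⊔ G.subgraphOfAdj hadj).IsMatching :=
    hM.sup (Subgraph.IsMatching.subgraphOfAdj hadj) hdisj
  have hE : (M ⊔ G.subgraphOfAdj hadj).edgeSet = insert s(x, y) M.edgeSet := by
    rw [Subgraph.edgeSet_sup, edgeSet_subgraphOfAdj, Set.union_singleton]
  have hnot : s(x, y) ∉ M.edgeSet := fun hc => hx (M.edge_vert hc)
  have := hmax _ hM'
  rw [hE, Set.ncard_insert_of_notMem hnot (Set.toFinite _)] at this
  omega

open SimpleGraph in
lemma matching_exchange {V : Type*} [Fintype V] {G : SimpleGraph V} {M : G.Subgraph}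
    (hM : M.IsMatching)
    (hmax : ∀ M' : G.Subgraph, M'.IsMatching → M'.edgeSet.ncard ≤ M.edgeSet.ncard)
    {x y u v : V} (hx : x ∉ M.verts) (hy : y ∉ M.verts) (hxy : x ≠ y)
    (huv : M.Adj u v) (hxu : G.Adj x u) (hyv : G.Adj y v) : False := by
  classical
  have huniq : ∀ {a b c : V}, M.Adj a b → M.Adj a c → b = c := by
    intro a b c h1 h2
    obtain ⟨w, -, hw⟩ := hM (M.edge_vert h1)
    rw [hw _ h1, hw _ h2]
  have hu : u ∈ M.verts := M.edge_vert huv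
  have hv : v ∈ M.verts := M.edge_vert huv.symm
  have hune : u ≠ v := (M.adj_sub huv).ne
  set D : G.Subgraph := M.deleteVerts {u, v} with hD
  have hDverts : D.verts = M.verts \ {u, v} := Subgraph.deleteVerts_verts
  have hDadj : ∀ a b : V, D.Adj a b ↔
      a ∈ M.verts ∧ a ∉ ({u, v} : Set V) ∧ b ∈ M.verts ∧ b ∉ ({u, v} : Set V) ∧ M.Adj a b := by
    intro a b
    rw [hD]
    exact Subgraph.deleteVerts_adj
  have hDm : D.IsMatching := by
    intro w hw
    rw [hDverts] at hw
    obtain ⟨hwM, hwuv⟩ := hw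
    obtain ⟨w', hw', -⟩ := hM hwM
    have hw'M : w' ∈ M.verts := M.edge_vert hw'.symm
    have hw'u : w' ≠ u := by
      intro h
      rw [h] at hw'
      have : w = v := huniq hw'.symm huv
      exact hwuv (by rw [this]; simp)
    have hw'v : w' ≠ v := by
      intro h
      rw [h] at hw'
      have : w = u := huniq hw'.symm huv.symm
      exact hwuv (by rw [this]; simp)
    refine ⟨w', ?_, ?_⟩
    · show D.Adj w w'
      rw [hDadj]
      exact ⟨hwM, hwuv, hw'M, by simp [hw'u, hw'v], hw'⟩
    · intro y' hy'
      rw [hDadj] at hy'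
      exact huniq hy'.2.2.2.2 hw'
  have hDE : D.edgeSet = M.edgeSet \ {s(u, v)} := by
    ext e
    induction e with
    | h a b =>
      rw [Subgraph.mem_edgeSet, hDadj]
      simp only [Set.mem_diff, Subgraph.mem_edgeSet, Set.mem_singleton_iff,
        Set.mem_insert_iff]
      constructor
      · rintro ⟨haM, hauv, hbM, hbuv, hab⟩
        refine ⟨hab, fun hc => ?_⟩
        rw [Sym2.eq_iff] at hc
        rcases hc with ⟨h1, h2⟩ | ⟨h1, h2⟩
        · exact hauv (Or.inl h1)
        · exact hauv (Or.inr h1)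
      · rintro ⟨hab, hne⟩
        refine ⟨M.edge_vert hab, ?_, M.edge_vert hab.symm, ?_, hab⟩
        · rintro (h | h)
          · rw [h] at hab
            refine hne ?_
            rw [h, huniq hab huv]
          · rw [h] at hab
            refine hne ?_
            rw [h, huniq hab huv.symm]
            exact Sym2.eq_swap
        · rintro (h | h)
          · rw [h] at hab
            refine hne ?_
            rw [h, huniq hab.symm huv]
            exact Sym2.eq_swap
          · rw [h] at hab
            refine hne ?_
            rw [h, huniq hab.symm huv.symm]
  have hDsupp : D.support ⊆ M.verts \ {u, v} := by
    intro a ha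
    have := D.support_subset_verts ha
    rwa [hDverts] at this
  have hd1 : Disjoint D.support (G.subgraphOfAdj hxu).support := by
    rw [support_subgraphOfAdj, Set.disjoint_left]
    intro a ha hc
    obtain ⟨haM, hauv⟩ := hDsupp ha
    simp only [Set.mem_insert_iff, Set.mem_singleton_iff] at hc
    rcases hc with h | h
    · exact hx (by rw [← h]; exact haM)
    · exact hauv (Or.inl h)
  have hm1 : (D ⊔ G.subgraphOfAdj hxu).IsMatching :=
    hDm.sup (Subgraph.IsMatching.subgraphOfAdj hxu) hd1
  have hd2 : Disjoint (D ⊔ G.subgraphOfAdj hxu).support (G.subgraphOfAdj hyv).support := by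
    rw [support_subgraphOfAdj, Set.disjoint_left]
    intro a ha hc
    have ha' : a ∈ D.support ∪ (G.subgraphOfAdj hxu).support := by
      obtain ⟨w, hw⟩ := ha
      rcases hw with hw | hw
      · exact Or.inl ⟨w, hw⟩
      · exact Or.inr ⟨w, hw⟩
    simp only [Set.mem_insert_iff, Set.mem_singleton_iff] at hc
    rcases ha' with ha' | ha'
    · obtain ⟨haM, hauv⟩ := hDsupp ha'
      rcases hc with h | h
      · exact hy (by rw [← h]; exact haM)
      · exact hauv (by rw [h]; simp)
    · rw [support_subgraphOfAdj] at ha'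
      simp only [Set.mem_insert_iff, Set.mem_singleton_iff] at ha'
      rcases ha' with h1 | h1 <;> rcases hc with h2 | h2
      · exact hxy (by rw [← h1, ← h2])
      · exact hx (by rw [← h1, h2]; exact hv)
      · exact hy (by rw [← h2, h1]; exact hu)
      · exact hune (by rw [← h1, ← h2])
  have hm2 : (D ⊔ G.subgraphOfAdj hxu ⊔ G.subgraphOfAdj hyv).IsMatching :=
    hm1.sup (Subgraph.IsMatching.subgraphOfAdj hyv) hd2
  have hE2 : (D ⊔ G.subgraphOfAdj hxu ⊔ G.subgraphOfAdj hyv).edgeSet =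
      insert s(y, v) (insert s(x, u) (M.edgeSet \ {s(u, v)})) := by
    rw [Subgraph.edgeSet_sup, Subgraph.edgeSet_sup, hDE, edgeSet_subgraphOfAdj,
      edgeSet_subgraphOfAdj, Set.union_singleton, Set.union_singleton]
  have hn1 : s(x, u) ∉ M.edgeSet \ {s(u, v)} := by
    rintro ⟨hc, -⟩
    exact hx (M.edge_vert hc)
  have hn2 : s(y, v) ∉ insert s(x, u) (M.edgeSet \ {s(u, v)}) := by
    rintro (hc | ⟨hc, -⟩)
    · rw [Sym2.eq_iff] at hc
      rcases hc with ⟨h1, h2⟩ | ⟨h1, h2⟩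
      · exact hxy (by rw [h1])
      · exact hy (by rw [h1]; exact hu)
    · exact hy (M.edge_vert hc)
  have hmem : s(u, v) ∈ M.edgeSet := huv
  have hposE : 1 ≤ M.edgeSet.ncard := by
    rw [Nat.one_le_iff_ne_zero, Ne, Set.ncard_eq_zero (Set.toFinite _)]
    exact fun hc => by simp [hc] at hmem
  have hcd : (M.edgeSet \ {s(u, v)}).ncard = M.edgeSet.ncard - 1 :=
    Set.ncard_diff_singleton_of_mem hmem
  have := hmax _ hm2
  rw [hE2, Set.ncard_insert_of_notMem hn2 (Set.toFinite _),
    Set.ncard_insert_of_notMem hn1 (Set.toFinite _), hcd] at this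
  omega

/-- structure of matching edges when `|X| ≥ 3` and `δ⁰(H) ≥ m`:
each matching edge has exactly one endpoint doubly adjacent to all of `X`,
while the other endpoint has no neighbours in `X`. -/
theorem stmt_5 {V : Type*} [Fintype V] (A : V → V → Prop) (hirr : ∀ v, ¬ A v v)
    (M : (UGraph A).Subgraph) (hM : M.IsMatching)
    (hmax : ∀ M' : (UGraph A).Subgraph, M'.IsMatching →
      M'.edgeSet.ncard ≤ M.edgeSet.ncard)
    (m : ℕ) (hm : M.edgeSet.ncard = m) (hpos : 0 < m)
    (hX : 3 ≤ (M.vertsᶜ).ncard)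
    (hdel : ∀ v : V, m ≤ {w | A v w}.ncard ∧ m ≤ {w | A w v}.ncard) :
    ∀ u v : V, M.Adj u v →
      ∃ a b : V, ({a, b} : Set V) = {u, v} ∧ a ≠ b ∧
        (∀ x ∈ M.vertsᶜ, A a x ∧ A x a) ∧
        (∀ x ∈ M.vertsᶜ, ¬ A b x ∧ ¬ A x b) := by
  classical
  intro u v huv
  have huniq : ∀ {a b c : V}, M.Adj a b → M.Adj a c → b = c := by
    intro a b c h1 h2
    obtain ⟨w, -, hw⟩ := hM (M.edge_vert h1)
    rw [hw _ h1, hw _ h2]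
  have hpfun : ∀ w : V, ∃ w' : V, w ∈ M.verts → M.Adj w w' := by
    intro w
    by_cases hw : w ∈ M.verts
    · obtain ⟨w', hw', -⟩ := hM hw
      exact ⟨w', fun _ => hw'⟩
    · exact ⟨w, fun h => absurd h hw⟩
  choose p hp using hpfun
  have hpv : ∀ w ∈ M.verts, p w ∈ M.verts := fun w hw => M.edge_vert (hp w hw).symm
  have hpp : ∀ w ∈ M.verts, p (p w) = w := fun w hw =>
    huniq (hp (p w) (hpv w hw)) (hp w hw).symm
  set X : Set V := M.vertsᶜ with hXdef
  have hXmem : ∀ {x : V}, x ∈ X → x ∉ M.verts := fun hx => hx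
  set N : V → Set V := fun y => {w | A y w ∨ A w y} with hNdef
  have hNadj : ∀ y ∈ X, ∀ w ∈ N y, (UGraph A).Adj y w := by
    intro y hy w hw
    have hw' : A y w ∨ A w y := hw
    refine (⟨fun h => ?_, hw'⟩ : y ≠ w ∧ (A y w ∨ A w y))
    rw [← h] at hw'
    rcases hw' with h' | h' <;> exact hirr y h'
  have hNsub : ∀ y ∈ X, N y ⊆ M.verts := by
    intro y hy w hw
    by_contra hwM
    exact matching_indep hM hmax (hXmem hy) hwM (hNadj y hy w hw)
  have hNcard : ∀ y : V, m ≤ (N y).ncard := by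
    intro y
    refine le_trans (hdel y).1 (Set.ncard_le_ncard ?_ (Set.toFinite _))
    intro w hw
    exact Or.inl hw
  have hface : ∀ y ∈ X, ∀ z ∈ X, y ≠ z → ∀ w ∈ N y, p w ∉ N z := by
    intro y hy z hz hyz w hw hc
    have hwv := hNsub y hy hw
    exact matching_exchange hM hmax (hXmem hy) (hXmem hz) hyz (hp w hwv)
      (hNadj y hy w hw) (hNadj z hz _ hc)
  have hvcard := matching_verts_ncard_le hM
  rw [hm] at hvcard
  have hinj : ∀ y ∈ X, Set.InjOn p (N y) := by
    intro y hy a ha b hb hab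
    have h := hpp a (hNsub y hy ha)
    rw [hab, hpp b (hNsub y hy hb)] at h
    exact h.symm
  have himgsub : ∀ y ∈ X, p '' N y ⊆ M.verts := by
    intro y hy
    rintro _ ⟨w, hw, rfl⟩
    exact hpv w (hNsub y hy hw)
  have hkey : ∀ y ∈ X, ∀ z ∈ X, y ≠ z → N z = M.verts \ (p '' N y) := by
    intro y hy z hz hyz
    have hdisj : Disjoint (N z) (p '' N y) := by
      rw [Set.disjoint_right]
      rintro _ ⟨w, hw, rfl⟩
      exact hface y hy z hz hyz w hw
    have himgcard : (p '' N y).ncard = (N y).ncard := Set.ncard_image_of_injOn (hinj y hy)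
    have hu1 : (N z ∪ p '' N y).ncard = (N z).ncard + (p '' N y).ncard :=
      Set.ncard_union_eq hdisj (Set.toFinite _) (Set.toFinite _)
    have hsub : N z ∪ p '' N y ⊆ M.verts := Set.union_subset (hNsub z hz) (himgsub y hy)
    have hle : M.verts.ncard ≤ (N z ∪ p '' N y).ncard := by
      have h1 := hNcard z
      have h2 := hNcard y
      omega
    have heq : N z ∪ p '' N y = M.verts :=
      Set.eq_of_subset_of_ncard_le hsub hle (Set.toFinite _)
    ext w
    constructor
    · intro hw
      exact ⟨hNsub z hz hw, fun hc => (Set.disjoint_left.mp hdisj hw) hc⟩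
    · rintro ⟨hwv, hwp⟩
      rw [← heq] at hwv
      rcases hwv with h | h
      · exact h
      · exact absurd h hwp
  have hne0 : X.Nonempty := by
    rw [← Set.ncard_pos (Set.toFinite _)]
    omega
  obtain ⟨x0, hx0⟩ := hne0
  obtain ⟨y0, hy0, hy0x⟩ := Set.exists_ne_of_one_lt_ncard (s := X) (by omega) x0
  have hpair : ({x0, y0} : Set V).ncard = 2 := Set.ncard_pair (Ne.symm hy0x)
  have hz3 : 0 < (X \ {x0, y0}).ncard := by
    have h := Set.ncard_le_ncard_diff_add_ncard X {x0, y0} (Set.toFinite _)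
    omega
  obtain ⟨z0, hz0X', hz0ne⟩ := (Set.ncard_pos (Set.toFinite _)).mp hz3
  have hz0x : z0 ≠ x0 := fun h => hz0ne (by rw [h]; simp)
  have hz0y : z0 ≠ y0 := fun h => hz0ne (by rw [h]; simp)
  have hNall : ∀ x' ∈ X, N x' = N x0 := by
    intro x' hx'
    by_cases hxx : x' = x0
    · rw [hxx]
    · set w0 := if x' = y0 then z0 else y0 with hw0
      have hw0X : w0 ∈ X := by
        rw [hw0]; split
        · exact hz0X'
        · exact hy0
      have hw0x' : w0 ≠ x' := by
        rw [hw0]; split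
        · next h => rw [h]; exact hz0y
        · next h => exact fun hc => h hc.symm
      have hw0x0 : w0 ≠ x0 := by
        rw [hw0]; split
        · exact hz0x
        · exact hy0x
      rw [hkey w0 hw0X x' hx' hw0x', hkey w0 hw0X x0 hx0 hw0x0]
  have hNN : N x0 = M.verts \ p '' N x0 := by
    have h := hkey y0 hy0 x0 hx0 hy0x
    rwa [hNall y0 hy0] at h
  have hNm : (N x0).ncard = m := by
    have h1 : (N x0).ncard = M.verts.ncard - (p '' N x0).ncard := by
      conv_lhs => rw [hNN]
      exact Set.ncard_diff (himgsub x0 hx0) (Set.toFinite _)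
    have h2 : (p '' N x0).ncard = (N x0).ncard := Set.ncard_image_of_injOn (hinj x0 hx0)
    have h4 := hNcard x0
    omega
  have hNarr : ∀ x' ∈ X, {w | A x' w} = N x0 ∧ {w | A w x'} = N x0 := by
    intro x' hx'
    have hsub1 : {w | A x' w} ⊆ N x0 := by
      rw [← hNall x' hx']
      intro w hw
      exact Or.inl hw
    have hsub2 : {w | A w x'} ⊆ N x0 := by
      rw [← hNall x' hx']
      intro w hw
      exact Or.inr hw
    exact ⟨Set.eq_of_subset_of_ncard_le hsub1 (by rw [hNm]; exact (hdel x').1) (Set.toFinite _),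
      Set.eq_of_subset_of_ncard_le hsub2 (by rw [hNm]; exact (hdel x').2) (Set.toFinite _)⟩
  have hgood : ∀ w ∈ N x0, ∀ x' ∈ X, A w x' ∧ A x' w := by
    intro w hw x' hx'
    obtain ⟨e1, e2⟩ := hNarr x' hx'
    constructor
    · have h : w ∈ {w' | A w' x'} := by rw [e2]; exact hw
      exact h
    · have h : w ∈ {w' | A x' w'} := by rw [e1]; exact hw
      exact h
  have hbad : ∀ w, w ∉ N x0 → ∀ x' ∈ X, ¬ A w x' ∧ ¬ A x' w := by
    intro w hw x' hx'
    obtain ⟨e1, e2⟩ := hNarr x' hx'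
    constructor
    · intro h
      apply hw
      rw [← e2]
      exact h
    · intro h
      apply hw
      rw [← e1]
      exact h
  have hu : u ∈ M.verts := M.edge_vert huv
  have hpu : p u = v := huniq (hp u hu) huv
  have hne : u ≠ v := (M.adj_sub huv).ne
  by_cases hcase : u ∈ N x0
  · have hvN : v ∉ N x0 := by
      have hvp : v ∈ p '' N x0 := ⟨u, hcase, hpu⟩
      rw [hNN]
      exact fun hc => hc.2 hvp
    exact ⟨u, v, rfl, hne, fun x hx => hgood u hcase x hx, fun x hx => hbad v hvN x hx⟩
  · have hup : u ∈ p '' N x0 := by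
      by_contra hc
      exact hcase (by rw [hNN]; exact ⟨hu, hc⟩)
    obtain ⟨w, hwN, hwp⟩ := hup
    have hwv : w ∈ M.verts := hNsub x0 hx0 hwN
    have hvw : v = w := by
      rw [← hpu, ← hwp, hpp w hwv]
    have hvN : v ∈ N x0 := by rw [hvw]; exact hwN
    exact ⟨v, u, Set.pair_comm v u, hne.symm,
      fun x hx => hgood v hvN x hx, fun x hx => hbad u hcase x hx⟩
end

section
/- Let H be a digraph with maximum matching M of its underlying graph, |M| = m > 0, X the set of M-uncovered vertices, |X| ≥ 3, and δ⁰(H) ≥ m. For each e ∈ M let u(e) be the endpoint of e with no neighbours in X and v(e) the other endpoint. Then the set {u(e) : e ∈ M} is an independent set in the underlying graph, d⁺(u(e)) = d⁻(u(e)) = m for every e ∈ M, and both arcs (u(e), v(e')) and (v(e'), u(e)) exist for all e, e' ∈ M (possibly e = e'). -/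
/-- with `u(e) = f e` the endpoint of `e` without neighbours in `X` and
`v(e) = g e` the other endpoint, `{u(e)}` is independent, `d⁺(u(e)) = d⁻(u(e)) = m`,
and all arcs `(u(e), v(e'))`, `(v(e'), u(e))` exist. -/
theorem stmt_6 {V : Type*} [Fintype V] (A : V → V → Prop) (hirr : ∀ v, ¬ A v v)
    (M : (UGraph A).Subgraph) (hM : M.IsMatching)
    (hmax : ∀ M' : (UGraph A).Subgraph, M'.IsMatching →
      M'.edgeSet.ncard ≤ M.edgeSet.ncard)
    (m : ℕ) (hm : M.edgeSet.ncard = m) (hpos : 0 < m)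
    (hX : 3 ≤ (M.vertsᶜ).ncard)
    (hdel : ∀ v : V, m ≤ {w | A v w}.ncard ∧ m ≤ {w | A w v}.ncard)
    (f g : Sym2 V → V)
    (hfg : ∀ e ∈ M.edgeSet, f e ∈ e ∧ g e ∈ e ∧ f e ≠ g e ∧
      (∀ x ∈ M.vertsᶜ, ¬ A (f e) x ∧ ¬ A x (f e)) ∧
      (∀ x ∈ M.vertsᶜ, A (g e) x ∧ A x (g e))) :
    (∀ e ∈ M.edgeSet, ∀ e' ∈ M.edgeSet, ¬ (UGraph A).Adj (f e) (f e')) ∧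
    (∀ e ∈ M.edgeSet, {w | A (f e) w}.ncard = m ∧ {w | A w (f e)}.ncard = m) ∧
    (∀ e ∈ M.edgeSet, ∀ e' ∈ M.edgeSet, A (f e) (g e') ∧ A (g e') (f e)) := by
  classical
  -- basic facts
  have heq : ∀ e ∈ M.edgeSet, e = s(f e, g e) := by
    intro e he
    obtain ⟨hf, hg, hne, -⟩ := hfg e he
    exact ((Sym2.mem_and_mem_iff hne).1 ⟨hf, hg⟩)
  have hadjfg : ∀ e ∈ M.edgeSet, M.Adj (f e) (g e) := by
    intro e he
    have := heq e he ▸ he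
    exact SimpleGraph.Subgraph.mem_edgeSet.1 this
  -- uniqueness of partners
  have hpart : ∀ {u w w'}, M.Adj u w → M.Adj u w' → w = w' := by
    intro u w w' h1 h2
    obtain ⟨p, -, hu⟩ := hM (M.edge_vert h1)
    exact (hu w h1).trans (hu w' h2).symm
  have hedge : ∀ e ∈ M.edgeSet, ∀ v ∈ e, ∃ w, M.Adj v w ∧ e = s(v, w) := by
    intro e he v hv
    rw [heq e he] at hv ⊢
    rcases Sym2.mem_iff.1 hv with h | h
    · exact ⟨g e, h ▸ hadjfg e he, by rw [h]⟩
    · exact ⟨f e, h ▸ (hadjfg e he).symm, by rw [h, Sym2.eq_swap]⟩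
  -- unique edge through a vertex
  have huniq : ∀ e ∈ M.edgeSet, ∀ e' ∈ M.edgeSet, ∀ v, v ∈ e → v ∈ e' → e = e' := by
    intro e he e' he' v hv hv'
    obtain ⟨w, hw1, hw2⟩ := hedge e he v hv
    obtain ⟨w', hw'1, hw'2⟩ := hedge e' he' v hv'
    rw [hw2, hw'2, hpart hw1 hw'1]
  have hfin : M.edgeSet.Finite := Set.toFinite _
  -- membership facts
  have hfv : ∀ e ∈ M.edgeSet, f e ∈ M.verts := fun e he => M.edge_vert (hadjfg e he)
  have hgv : ∀ e ∈ M.edgeSet, g e ∈ M.verts := fun e he => M.edge_vert (hadjfg e he).symm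
  -- PART 1: independence
  have ind : ∀ e ∈ M.edgeSet, ∀ e' ∈ M.edgeSet, ¬ (UGraph A).Adj (f e) (f e') := by
    intro e he e' he' hadj
    have hff : f e ≠ f e' := hadj.ne
    have hee' : e ≠ e' := fun h => hff (by rw [h])
    -- two distinct uncovered vertices
    obtain ⟨x, hx, x', hx', hxx'⟩ : ∃ x ∈ M.vertsᶜ, ∃ x' ∈ M.vertsᶜ, x ≠ x' := by
      rw [← Set.one_lt_ncard (Set.toFinite _)]
      omega
    -- names
    set a := f e with ha
    set b := g e with hb
    set a' := f e' with ha'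
    set b' := g e' with hb'
    have hxa : x ∉ M.verts := hx
    have hxa' : x' ∉ M.verts := hx'
    -- pairwise distinctness
    have hab : a ≠ b := (hfg e he).2.2.1
    have ha'b' : a' ≠ b' := (hfg e' he').2.2.1
    have hdiff : ∀ v, v ∈ e → v ∈ e' → False := fun v h1 h2 => hee' (huniq e he e' he' v h1 h2)
    have hab' : a ≠ b' := fun h => hdiff a (hfg e he).1 (h ▸ (hfg e' he').2.1)
    have ha'b : a' ≠ b := fun h => hdiff a' (h ▸ (hfg e he).2.1) (hfg e' he').1
    have hbb' : b ≠ b' := fun h => hdiff b (hfg e he).2.1 (h ▸ (hfg e' he').2.1)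
    -- the three new edges
    have h1 : (UGraph A).Adj b x := (⟨fun h => hxa (h ▸ hgv e he), Or.inl ((hfg e he).2.2.2.2 x hx).1⟩ : b ≠ x ∧ (A b x ∨ A x b))
    have h2 : (UGraph A).Adj b' x' := (⟨fun h => hxa' (h ▸ hgv e' he'), Or.inl ((hfg e' he').2.2.2.2 x' hx').1⟩ : b' ≠ x' ∧ (A b' x' ∨ A x' b'))
    set S : Set V := {a, b, a', b'} with hS
    set D := M.deleteVerts S with hD
    set M' := D ⊔ ((UGraph A).subgraphOfAdj hadj ⊔ ((UGraph A).subgraphOfAdj h1 ⊔ (UGraph A).subgraphOfAdj h2)) with hM'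
    -- no vertex of S is a partner of a vertex outside S
    have hmemS : ∀ v, (v = a ∨ v = b ∨ v = a' ∨ v = b') → v ∈ S := by
      intro v hv
      rw [hS]
      simp only [Set.mem_insert_iff, Set.mem_singleton_iff]
      exact hv
    have hSpart : ∀ v w, M.Adj v w → v ∉ S → w ∉ S := by
      intro v w hvw hvS hwS
      rcases hwS with h | h | h | h
      · exact hvS (by rw [hS]; subst h; have := hpart hvw.symm (hadjfg e he); simp [this, hb])
      · exact hvS (by rw [hS]; subst h; have := hpart hvw.symm (hadjfg e he).symm; simp [this, ha])
      · exact hvS (by rw [hS]; subst h; have := hpart hvw.symm (hadjfg e' he'); simp [this, hb'])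
      · exact hvS (by rw [hS]; subst h; have := hpart hvw.symm (hadjfg e' he').symm; simp [this, ha'])
    -- D is a matching
    have hDM : D.IsMatching := by
      intro v hv
      rw [hD, SimpleGraph.Subgraph.deleteVerts_verts] at hv
      obtain ⟨w, hw, hu⟩ := hM hv.1
      refine ⟨w, ?_, ?_⟩
      · exact SimpleGraph.Subgraph.deleteVerts_adj.2
          ⟨hv.1, hv.2, M.edge_vert hw.symm, hSpart v w hw hv.2, hw⟩
      · intro y hy
        exact hu y (SimpleGraph.Subgraph.deleteVerts_adj.1 hy).2.2.2.2
    -- supports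
    have hDsup : D.support ⊆ M.verts \ S := by
      intro v hv
      have := SimpleGraph.Subgraph.support_subset_verts D hv
      rwa [hD, SimpleGraph.Subgraph.deleteVerts_verts] at this
    have hsup1 : ((UGraph A).subgraphOfAdj hadj).support = {a, a'} :=
      SimpleGraph.support_subgraphOfAdj hadj
    have hsup2 : ((UGraph A).subgraphOfAdj h1).support = {b, x} :=
      SimpleGraph.support_subgraphOfAdj h1
    have hsup3 : ((UGraph A).subgraphOfAdj h2).support = {b', x'} :=
      SimpleGraph.support_subgraphOfAdj h2
    have support_sup : ∀ (H1 H2 : (UGraph A).Subgraph),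
        (H1 ⊔ H2).support = H1.support ∪ H2.support := by
      intro H1 H2
      ext v
      simp [SimpleGraph.Subgraph.mem_support, SimpleGraph.Subgraph.sup_adj, exists_or]
    -- M' is a matching
    have hM'M : M'.IsMatching := by
      refine SimpleGraph.Subgraph.IsMatching.sup hDM
        (SimpleGraph.Subgraph.IsMatching.sup (SimpleGraph.Subgraph.IsMatching.subgraphOfAdj hadj)
          (SimpleGraph.Subgraph.IsMatching.sup (SimpleGraph.Subgraph.IsMatching.subgraphOfAdj h1)
            (SimpleGraph.Subgraph.IsMatching.subgraphOfAdj h2) ?_) ?_) ?_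
      · rw [hsup2, hsup3]
        refine Set.disjoint_left.2 fun v hv hv2 => ?_
        simp only [Set.mem_insert_iff, Set.mem_singleton_iff] at hv hv2
        have hxb' : x ≠ b' := fun h => hxa (h ▸ hgv e' he')
        have hxb : x' ≠ b := fun h => hxa' (h ▸ hgv e he)
        rcases hv with rfl | rfl <;> rcases hv2 with h | h
        · exact hbb' h
        · exact hxb h.symm
        · exact hxb' h
        · exact hxx' h
      · rw [hsup1, support_sup, hsup2, hsup3]
        refine Set.disjoint_left.2 fun v hv hv2 => ?_
        simp only [Set.mem_union, Set.mem_insert_iff, Set.mem_singleton_iff] at hv hv2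
        have h1' : a ≠ x := fun h => hxa (h ▸ hfv e he)
        have h2' : a ≠ x' := fun h => hxa' (h ▸ hfv e he)
        have h3' : a' ≠ x := fun h => hxa (h ▸ hfv e' he')
        have h4' : a' ≠ x' := fun h => hxa' (h ▸ hfv e' he')
        rcases hv with rfl | rfl <;> rcases hv2 with (h | h) | (h | h)
        · exact hab h
        · exact h1' h
        · exact hab' h
        · exact h2' h
        · exact ha'b h
        · exact h3' h
        · exact ha'b' h
        · exact h4' h
      · refine Set.disjoint_left.2 fun v hv hv2 => ?_
        have hv' := hDsup hv
        rw [support_sup, support_sup, hsup1, hsup2, hsup3] at hv2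
        simp only [Set.mem_union, Set.mem_insert_iff, Set.mem_singleton_iff] at hv2
        rcases hv2 with (h | h) | (h | h) | (h | h)
        · exact hv'.2 (hmemS v (Or.inl h))
        · exact hv'.2 (hmemS v (Or.inr (Or.inr (Or.inl h))))
        · exact hv'.2 (hmemS v (Or.inr (Or.inl h)))
        · exact hxa (h ▸ hv'.1)
        · exact hv'.2 (hmemS v (Or.inr (Or.inr (Or.inr h))))
        · exact hxa' (h ▸ hv'.1)
    -- edge set of D
    have hDedge : D.edgeSet = M.edgeSet \ {e, e'} := by
      ext z
      refine z.ind (fun u v => ?_)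
      simp only [SimpleGraph.Subgraph.mem_edgeSet, Set.mem_diff, Set.mem_insert_iff,
        Set.mem_singleton_iff, hD]
      constructor
      · intro hz
        obtain ⟨huv, huS, hvv, hvS, hadj'⟩ := SimpleGraph.Subgraph.deleteVerts_adj.1 hz
        refine ⟨SimpleGraph.Subgraph.mem_edgeSet.1 hadj', ?_⟩
        push_neg
        constructor
        · intro hze
          have hae : a ∈ s(u, v) := hze ▸ (hfg e he).1
          rcases Sym2.mem_iff.1 hae with h | h
          · exact huS (hmemS u (Or.inl h.symm))
          · exact hvS (hmemS v (Or.inl h.symm))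
        · intro hze
          have hae : a' ∈ s(u, v) := hze ▸ (hfg e' he').1
          rcases Sym2.mem_iff.1 hae with h | h
          · exact huS (hmemS u (Or.inr (Or.inr (Or.inl h.symm))))
          · exact hvS (hmemS v (Or.inr (Or.inr (Or.inl h.symm))))
      · rintro ⟨hz, hze⟩
        push_neg at hze
        obtain ⟨hze, hze'⟩ := hze
        have hzM : s(u, v) ∈ M.edgeSet := hz
        have key : ∀ w, w ∈ s(u, v) → w ∉ S := by
          intro w hw hwS
          rw [hS] at hwS
          simp only [Set.mem_insert_iff, Set.mem_singleton_iff] at hwS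
          rcases hwS with h | h | h | h
          · exact hze (huniq _ hzM e he w hw (h ▸ (hfg e he).1))
          · exact hze (huniq _ hzM e he w hw (h ▸ (hfg e he).2.1))
          · exact hze' (huniq _ hzM e' he' w hw (h ▸ (hfg e' he').1))
          · exact hze' (huniq _ hzM e' he' w hw (h ▸ (hfg e' he').2.1))
        exact SimpleGraph.Subgraph.deleteVerts_adj.2
          ⟨M.edge_vert hz, key u (Sym2.mem_mk_left u v), M.edge_vert hz.symm,
            key v (Sym2.mem_mk_right u v), hz⟩
    -- edge set of M'
    have hM'edge : M'.edgeSet = (M.edgeSet \ {e, e'}) ∪ {s(a, a'), s(b, x), s(b', x')} := by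
      rw [hM', SimpleGraph.Subgraph.edgeSet_sup, SimpleGraph.Subgraph.edgeSet_sup,
        SimpleGraph.Subgraph.edgeSet_sup, hDedge,
        SimpleGraph.edgeSet_subgraphOfAdj, SimpleGraph.edgeSet_subgraphOfAdj,
        SimpleGraph.edgeSet_subgraphOfAdj]
      simp only [Set.union_assoc, Set.singleton_union, Set.insert_def]
    -- counting
    have hnotmem : ∀ z ∈ ({s(a, a'), s(b, x), s(b', x')} : Set (Sym2 V)), z ∉ M.edgeSet \ {e, e'} := by
      intro z hzm hzd
      obtain ⟨hz, hz2⟩ := hzd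
      simp only [Set.mem_insert_iff, Set.mem_singleton_iff] at hzm hz2
      push_neg at hz2
      rcases hzm with rfl | rfl | rfl
      · exact hz2.1 (huniq _ hz e he a (Sym2.mem_mk_left a a') (hfg e he).1)
      · exact hxa (M.edge_vert (SimpleGraph.Subgraph.mem_edgeSet.1 hz).symm)
      · exact hxa' (M.edge_vert (SimpleGraph.Subgraph.mem_edgeSet.1 hz).symm)
    have hdisj : Disjoint (M.edgeSet \ {e, e'}) ({s(a, a'), s(b, x), s(b', x')} : Set (Sym2 V)) :=
      Set.disjoint_right.2 hnotmem
    have hsub : ({e, e'} : Set (Sym2 V)) ⊆ M.edgeSet := by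
      rintro z (rfl | rfl); exacts [he, he']
    have hcd : (M.edgeSet \ {e, e'}).ncard = m - 2 := by
      rw [Set.ncard_diff hsub (Set.toFinite _), Set.ncard_pair hee', hm]
    have h2m : 2 ≤ m := by
      rw [← hm, ← Set.ncard_pair hee']
      exact Set.ncard_le_ncard hsub hfin
    have hc3 : ({s(a, a'), s(b, x), s(b', x')} : Set (Sym2 V)).ncard = 3 := by
      have d1 : s(a, a') ≠ s(b, x) := by
        intro h
        have : a ∈ s(b, x) := h ▸ Sym2.mem_mk_left a a'
        rcases Sym2.mem_iff.1 this with h' | h'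
        · exact hab h'
        · exact hxa (h' ▸ hfv e he)
      have d2 : s(a, a') ≠ s(b', x') := by
        intro h
        have : a ∈ s(b', x') := h ▸ Sym2.mem_mk_left a a'
        rcases Sym2.mem_iff.1 this with h' | h'
        · exact hab' h'
        · exact hxa' (h' ▸ hfv e he)
      have d3 : s(b, x) ≠ s(b', x') := by
        intro h
        have : b ∈ s(b', x') := h ▸ Sym2.mem_mk_left b x
        rcases Sym2.mem_iff.1 this with h' | h'
        · exact hbb' h'
        · exact hxa' (h' ▸ hgv e he)
      rw [Set.ncard_insert_of_notMem (by simp [d1, d2]) (Set.toFinite _),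
        Set.ncard_insert_of_notMem (by simp [d3]) (Set.toFinite _), Set.ncard_singleton]
    have hcount : M'.edgeSet.ncard = m + 1 := by
      rw [hM'edge, Set.ncard_union_eq hdisj (Set.toFinite _) (Set.toFinite _), hcd, hc3]
      omega
    have := hmax M' hM'M
    rw [hcount, hm] at this
    omega
  -- PART 2 and 3: neighbourhoods of f e
  have himgfin : (g '' M.edgeSet).Finite := Set.toFinite _
  have himgcard : (g '' M.edgeSet).ncard ≤ m := hm ▸ Set.ncard_image_le hfin
  have hends : ∀ e'' ∈ M.edgeSet, ∀ w ∈ e'', w = f e'' ∨ w = g e'' := by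
    intro e'' he'' w hw
    rw [heq e'' he''] at hw
    exact Sym2.mem_iff.1 hw
  have hsubout : ∀ e ∈ M.edgeSet, {w | A (f e) w} ⊆ g '' M.edgeSet := by
    intro e he w hw
    have hwv : w ∈ M.verts := by
      by_contra hwc
      exact ((hfg e he).2.2.2.1 w hwc).1 hw
    obtain ⟨p, hp, -⟩ := hM hwv
    have he'' : s(w, p) ∈ M.edgeSet := SimpleGraph.Subgraph.mem_edgeSet.2 hp
    rcases hends _ he'' w (Sym2.mem_mk_left w p) with h | h
    · exfalso
      have hne : f e ≠ w := fun hh => hirr (f e) (hh ▸ hw)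
      exact ind e he _ he'' (⟨h ▸ hne, Or.inl (h ▸ hw)⟩ : f e ≠ f s(w, p) ∧ (A (f e) (f s(w, p)) ∨ A (f s(w, p)) (f e)))
    · exact ⟨s(w, p), he'', h.symm⟩
  have hsubin : ∀ e ∈ M.edgeSet, {w | A w (f e)} ⊆ g '' M.edgeSet := by
    intro e he w hw
    have hwv : w ∈ M.verts := by
      by_contra hwc
      exact ((hfg e he).2.2.2.1 w hwc).2 hw
    obtain ⟨p, hp, -⟩ := hM hwv
    have he'' : s(w, p) ∈ M.edgeSet := SimpleGraph.Subgraph.mem_edgeSet.2 hp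
    rcases hends _ he'' w (Sym2.mem_mk_left w p) with h | h
    · exfalso
      have hne : f e ≠ w := fun hh => hirr (f e) (hh ▸ hw)
      exact ind e he _ he'' (⟨h ▸ hne, Or.inr (h ▸ hw)⟩ : f e ≠ f s(w, p) ∧ (A (f e) (f s(w, p)) ∨ A (f s(w, p)) (f e)))
    · exact ⟨s(w, p), he'', h.symm⟩
  have houteq : ∀ e ∈ M.edgeSet, {w | A (f e) w} = g '' M.edgeSet := fun e he =>
    Set.eq_of_subset_of_ncard_le (hsubout e he) (himgcard.trans (hdel (f e)).1) himgfin
  have hineq : ∀ e ∈ M.edgeSet, {w | A w (f e)} = g '' M.edgeSet := fun e he =>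
    Set.eq_of_subset_of_ncard_le (hsubin e he) (himgcard.trans (hdel (f e)).2) himgfin
  have himgm : (g '' M.edgeSet).ncard = m := by
    obtain ⟨e, he⟩ : ∃ e, e ∈ M.edgeSet := by
      rw [← Set.nonempty_def, ← Set.ncard_pos hfin, hm]; exact hpos
    have := (hdel (f e)).1
    rw [houteq e he] at this
    omega
  refine ⟨ind, ?_, ?_⟩
  · intro e he
    rw [houteq e he, hineq e he, himgm]
    exact ⟨rfl, rfl⟩
  · intro e he e' he'
    have hmem : g e' ∈ g '' M.edgeSet := ⟨e', he', rfl⟩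
    constructor
    · have : g e' ∈ {w | A (f e) w} := by rw [houteq e he]; exact hmem
      exact this
    · have : g e' ∈ {w | A w (f e)} := by rw [hineq e he]; exact hmem
      exact this
end

section
/- Let H be a digraph with maximum matching M of its underlying graph, |M| = m > 0, and suppose the uncovered set X = {x, x'} has exactly two vertices, δ⁰(H) ≥ m, and the set M_x = {e ∈ M : some endpoint of e is adjacent to x} satisfies |M_x| = m/2. Then the induced subdigraphs on V(M_x) ∪ {x} and on V(M − M_x) ∪ {x'} are both complete digraphs on m+1 vertices, and there are no arcs between these two vertex sets. -/
open SimpleGraph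

lemma aux_mem_edge {V : Type*} {G : SimpleGraph V} {M : G.Subgraph} {e : Sym2 V} {w : V}
    (he : e ∈ M.edgeSet) (hw : w ∈ e) : ∃ u, e = s(w, u) ∧ M.Adj w u := by
  induction e with
  | _ a b =>
    rw [SimpleGraph.Subgraph.mem_edgeSet] at he
    rcases Sym2.mem_iff.mp hw with rfl | rfl
    · exact ⟨b, rfl, he⟩
    · exact ⟨a, Sym2.eq_swap, he.symm⟩

lemma aux_pairwise {V : Type*} {G : SimpleGraph V} {M : G.Subgraph} (hM : M.IsMatching) :
    ∀ e ∈ M.edgeSet, ∀ f ∈ M.edgeSet, ∀ w : V, w ∈ e → w ∈ f → e = f := by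
  intro e he f hf w hwe hwf
  obtain ⟨u, rfl, hadj⟩ := aux_mem_edge he hwe
  obtain ⟨u', rfl, hadj'⟩ := aux_mem_edge hf hwf
  obtain ⟨z, hz, hzu⟩ := hM (M.edge_vert hadj)
  rw [hzu u hadj, hzu u' hadj']

lemma aux_card {V : Type*} [Fintype V] (E : Set (Sym2 V))
    (hnd : ∀ e ∈ E, ¬ e.IsDiag)
    (hpd : ∀ e ∈ E, ∀ f ∈ E, ∀ w : V, w ∈ e → w ∈ f → e = f) :
    {w | ∃ e ∈ E, w ∈ e}.ncard = 2 * E.ncard := by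
  generalize hn : E.ncard = n
  induction n generalizing E with
  | zero =>
    have hE : E = ∅ := by rwa [Set.ncard_eq_zero (Set.toFinite E)] at hn
    subst hE
    simp
  | succ n ih =>
    obtain ⟨e, he⟩ : E.Nonempty := by
      rw [Set.nonempty_iff_ne_empty]
      rintro rfl
      simp at hn
    induction e with
    | _ a b =>
      have hab : a ≠ b := by
        intro h; exact hnd _ he (by simp [Sym2.mk_isDiag_iff, h])
      have hsplit : {w | ∃ e ∈ E, w ∈ e}
          = ({a, b} : Set V) ∪ {w | ∃ e ∈ E \ {s(a, b)}, w ∈ e} := by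
        ext w
        simp only [Set.mem_setOf_eq, Set.mem_union, Set.mem_insert_iff,
          Set.mem_singleton_iff, Set.mem_diff]
        constructor
        · rintro ⟨f, hf, hwf⟩
          by_cases hfe : f = s(a, b)
          · subst hfe; exact Or.inl (Sym2.mem_iff.mp hwf)
          · exact Or.inr ⟨f, ⟨hf, hfe⟩, hwf⟩
        · rintro (h | ⟨f, ⟨hf, _⟩, hwf⟩)
          · exact ⟨s(a, b), he, Sym2.mem_iff.mpr h⟩
          · exact ⟨f, hf, hwf⟩
      have hdis : Disjoint ({a, b} : Set V) {w | ∃ e ∈ E \ {s(a, b)}, w ∈ e} := by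
        rw [Set.disjoint_left]
        rintro w hw ⟨f, ⟨hf, hfe⟩, hwf⟩
        exact hfe (hpd f hf _ he w hwf (Sym2.mem_iff.mpr hw))
      have hE' : (E \ {s(a, b)}).ncard = n := by
        have := Set.ncard_diff_singleton_of_mem he
        omega
      have hrec := ih (E \ {s(a, b)}) (fun f hf => hnd f hf.1)
        (fun f hf g hg w h1 h2 => hpd f hf.1 g hg.1 w h1 h2) hE'
      rw [hsplit, Set.ncard_union_eq hdis (Set.toFinite _) (Set.toFinite _),
        Set.ncard_pair hab, hrec]
      omega

lemma aux_del {V : Type*} {G : SimpleGraph V} {M : G.Subgraph} (hM : M.IsMatching) {S : Set V}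
    (hS : ∀ v w, M.Adj v w → v ∈ S → w ∈ S) : (M.deleteVerts S).IsMatching := by
  intro v hv
  rw [Subgraph.deleteVerts_verts] at hv
  obtain ⟨w, hw, huniq⟩ := hM hv.1
  refine ⟨w, ?_, ?_⟩
  · show (M.deleteVerts S).Adj v w
    rw [Subgraph.deleteVerts_adj]
    exact ⟨hv.1, hv.2, M.edge_vert hw.symm, fun hwS => hv.2 (hS w v hw.symm hwS), hw⟩
  · intro y hy
    exact huniq y (Subgraph.deleteVerts_adj.mp (show (M.deleteVerts S).Adj v y from hy)).2.2.2.2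

lemma aux_del_edge {V : Type*} {G : SimpleGraph V} (M : G.Subgraph) (S : Set V) :
    (M.deleteVerts S).edgeSet = {e ∈ M.edgeSet | ∀ w ∈ e, w ∉ S} := by
  ext e
  induction e with
  | _ a b =>
    simp only [Set.mem_setOf_eq, Subgraph.mem_edgeSet, Subgraph.deleteVerts_adj, Sym2.mem_iff]
    constructor
    · rintro ⟨_, haS, _, hbS, hadj⟩
      exact ⟨hadj, by rintro w (rfl | rfl) <;> assumption⟩
    · rintro ⟨hadj, hS⟩
      exact ⟨M.edge_vert hadj, hS a (Or.inl rfl), M.edge_vert hadj.symm, hS b (Or.inr rfl), hadj⟩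

lemma aux_augment {V : Type*} [Fintype V] {G : SimpleGraph V} {M : G.Subgraph}
    (hM : M.IsMatching) (R : Set (Sym2 V)) (hR : R ⊆ M.edgeSet)
    (P : G.Subgraph) (hP : P.IsMatching)
    (hsup : ∀ v ∈ P.support, (∃ e ∈ R, v ∈ e) ∨ v ∉ M.verts)
    (hcard : R.ncard < P.edgeSet.ncard) :
    ∃ M' : G.Subgraph, M'.IsMatching ∧ M.edgeSet.ncard < M'.edgeSet.ncard := by
  classical
  set S : Set V := {v | ∃ e ∈ R, v ∈ e} with hSdef
  have hSclosed : ∀ v w, M.Adj v w → v ∈ S → w ∈ S := by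
    rintro v w hvw ⟨e, heR, hve⟩
    obtain ⟨u, rfl, hadj⟩ := aux_mem_edge (hR heR) hve
    obtain ⟨z, hz, hzu⟩ := hM (M.edge_vert hvw)
    have : u = w := by rw [hzu u hadj, hzu w hvw]
    subst this
    exact ⟨s(v, u), heR, Sym2.mem_mk_right v u⟩
  have hD : (M.deleteVerts S).IsMatching := aux_del hM hSclosed
  have hDedge : (M.deleteVerts S).edgeSet = M.edgeSet \ R := by
    rw [aux_del_edge]
    ext e
    simp only [Set.mem_setOf_eq, Set.mem_diff]
    constructor
    · rintro ⟨he, hnoS⟩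
      refine ⟨he, fun heR => ?_⟩
      induction e with
      | _ a b => exact hnoS a (Sym2.mem_mk_left a b) ⟨s(a, b), heR, Sym2.mem_mk_left a b⟩
    · rintro ⟨he, heR⟩
      refine ⟨he, fun w hwe ⟨f, hfR, hwf⟩ => ?_⟩
      exact heR (aux_pairwise hM e he f (hR hfR) w hwe hwf ▸ hfR)
  have hdisj : Disjoint (M.deleteVerts S).support P.support := by
    rw [Set.disjoint_left]
    intro v hvD hvP
    have hv : v ∈ M.verts \ S := by
      have := (M.deleteVerts S).support_subset_verts hvD
      rwa [Subgraph.deleteVerts_verts] at this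
    rcases hsup v hvP with h | h
    · exact hv.2 h
    · exact h hv.1
  refine ⟨M.deleteVerts S ⊔ P, hD.sup hP hdisj, ?_⟩
  have hedges : (M.deleteVerts S ⊔ P).edgeSet = (M.edgeSet \ R) ∪ P.edgeSet := by
    rw [Subgraph.edgeSet_sup, hDedge]
  have hdisjE : Disjoint (M.edgeSet \ R) P.edgeSet := by
    rw [Set.disjoint_left]
    intro e heD heP
    have heD' : e ∈ (M.deleteVerts S).edgeSet := hDedge ▸ heD
    induction e with
    | _ a b =>
      rw [Subgraph.mem_edgeSet] at heD' heP
      exact Set.disjoint_left.mp hdisj ⟨b, heD'⟩ ⟨b, heP⟩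
  have hRle : R.ncard ≤ M.edgeSet.ncard := Set.ncard_le_ncard hR (Set.toFinite _)
  have hdiff : (M.edgeSet \ R).ncard = M.edgeSet.ncard - R.ncard :=
    Set.ncard_diff hR (Set.toFinite _)
  rw [hedges, Set.ncard_union_eq hdisjE (Set.toFinite _) (Set.toFinite _), hdiff]
  omega

/-- the two-uncovered-vertices case with `|M_x| = m/2`: the two halves
induce complete digraphs `K*_{m+1}` with no arcs between them. -/
theorem stmt_7 {V : Type*} [Fintype V] (A : V → V → Prop) (hirr : ∀ v, ¬ A v v)
    (M : (UGraph A).Subgraph) (hM : M.IsMatching)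
    (hmax : ∀ M' : (UGraph A).Subgraph, M'.IsMatching →
      M'.edgeSet.ncard ≤ M.edgeSet.ncard)
    (m : ℕ) (hm : M.edgeSet.ncard = m) (hpos : 0 < m)
    (x x' : V) (hxx : x ≠ x') (hX : M.vertsᶜ = ({x, x'} : Set V))
    (hdel : ∀ v : V, m ≤ {w | A v w}.ncard ∧ m ≤ {w | A w v}.ncard)
    (hMx : 2 * ({e ∈ M.edgeSet | ∃ y ∈ e, (UGraph A).Adj x y}).ncard = m) :
    ({w | ∃ e ∈ ({e ∈ M.edgeSet | ∃ y ∈ e, (UGraph A).Adj x y}), w ∈ e} ∪ {x}).ncard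
        = m + 1 ∧
    ({w | ∃ e ∈ (M.edgeSet \ {e ∈ M.edgeSet | ∃ y ∈ e, (UGraph A).Adj x y}), w ∈ e}
        ∪ {x'}).ncard = m + 1 ∧
    (∀ a ∈ ({w | ∃ e ∈ ({e ∈ M.edgeSet | ∃ y ∈ e, (UGraph A).Adj x y}), w ∈ e} ∪ {x}),
      ∀ b ∈ ({w | ∃ e ∈ ({e ∈ M.edgeSet | ∃ y ∈ e, (UGraph A).Adj x y}), w ∈ e} ∪ {x}),
        a ≠ b → A a b) ∧
    (∀ a ∈ ({w | ∃ e ∈ (M.edgeSet \ {e ∈ M.edgeSet | ∃ y ∈ e, (UGraph A).Adj x y}),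
        w ∈ e} ∪ {x'}),
      ∀ b ∈ ({w | ∃ e ∈ (M.edgeSet \ {e ∈ M.edgeSet | ∃ y ∈ e, (UGraph A).Adj x y}),
        w ∈ e} ∪ {x'}), a ≠ b → A a b) ∧
    (∀ a ∈ ({w | ∃ e ∈ ({e ∈ M.edgeSet | ∃ y ∈ e, (UGraph A).Adj x y}), w ∈ e} ∪ {x}),
      ∀ b ∈ ({w | ∃ e ∈ (M.edgeSet \ {e ∈ M.edgeSet | ∃ y ∈ e, (UGraph A).Adj x y}),
        w ∈ e} ∪ {x'}), ¬ A a b ∧ ¬ A b a) := by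
  classical
  have hAne : ∀ {v w : V}, A v w → v ≠ w := by
    rintro v w h rfl; exact hirr v h
  set Mx : Set (Sym2 V) := {e ∈ M.edgeSet | ∃ y ∈ e, (UGraph A).Adj x y} with hMxdef
  set Sx : Set V := {w | ∃ e ∈ Mx, w ∈ e} with hSxdef
  set My : Set (Sym2 V) := M.edgeSet \ Mx with hMydef
  set Sy : Set V := {w | ∃ e ∈ My, w ∈ e} with hSydef
  -- unfolding helpers
  have hMxI : ∀ {e : Sym2 V}, e ∈ M.edgeSet → (∃ y ∈ e, (UGraph A).Adj x y) → e ∈ Mx := by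
    intro e h1 h2; rw [hMxdef]; exact ⟨h1, h2⟩
  have hMxsub : Mx ⊆ M.edgeSet := by
    intro e he; rw [hMxdef] at he; exact he.1
  have hMyI : ∀ {e : Sym2 V}, e ∈ M.edgeSet → e ∉ Mx → e ∈ My := by
    intro e h1 h2; rw [hMydef]; exact ⟨h1, h2⟩
  have hMyE : ∀ {e : Sym2 V}, e ∈ My → e ∈ M.edgeSet ∧ e ∉ Mx := by
    intro e h; rwa [hMydef] at h
  have hMysub : My ⊆ M.edgeSet := fun e he => (hMyE he).1
  have hSxI : ∀ {e : Sym2 V} {v : V}, e ∈ Mx → v ∈ e → v ∈ Sx := by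
    intro e v he hv; rw [hSxdef]; exact ⟨e, he, hv⟩
  have hSxE : ∀ {v : V}, v ∈ Sx → ∃ e ∈ Mx, v ∈ e := by
    intro v hv; rwa [hSxdef] at hv
  have hSyI : ∀ {e : Sym2 V} {v : V}, e ∈ My → v ∈ e → v ∈ Sy := by
    intro e v he hv; rw [hSydef]; exact ⟨e, he, hv⟩
  have hSyE : ∀ {v : V}, v ∈ Sy → ∃ e ∈ My, v ∈ e := by
    intro v hv; rwa [hSydef] at hv
  -- basic facts
  have hvnm : ∀ v : V, v ∉ M.verts ↔ v = x ∨ v = x' := by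
    intro v
    rw [← Set.mem_compl_iff, hX]
    simp
  have hxM : x ∉ M.verts := (hvnm x).mpr (Or.inl rfl)
  have hx'M : x' ∉ M.verts := (hvnm x').mpr (Or.inr rfl)
  have hpd := aux_pairwise hM
  have hnd : ∀ e ∈ M.edgeSet, ¬ e.IsDiag := by
    intro e he
    induction e with
    | _ a b =>
      rw [Sym2.mk_isDiag_iff]
      exact (M.adj_sub (SimpleGraph.Subgraph.mem_edgeSet.mp he)).ne
  have hSxcard : Sx.ncard = m := by
    have h := aux_card Mx (fun e he => hnd e (hMxsub he))
      (fun e he f hf w h1 h2 => hpd e (hMxsub he) f (hMxsub hf) w h1 h2)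
    have h2 : Sx.ncard = 2 * Mx.ncard := by rw [hSxdef]; exact h
    omega
  have hMycard : My.ncard = m - Mx.ncard := by
    rw [hMydef, Set.ncard_diff hMxsub (Set.toFinite _), hm]
  have hMxle : Mx.ncard ≤ M.edgeSet.ncard := Set.ncard_le_ncard hMxsub (Set.toFinite _)
  have hSycard : Sy.ncard = m := by
    have h := aux_card My (fun e he => hnd e (hMysub he))
      (fun e he f hf w h1 h2 => hpd e (hMysub he) f (hMysub hf) w h1 h2)
    have h2 : Sy.ncard = 2 * My.ncard := by rw [hSydef]; exact h
    omega
  have hverts : M.verts = Sx ∪ Sy := by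
    ext v
    constructor
    · intro hv
      obtain ⟨w, hw, -⟩ := hM hv
      have he : s(v, w) ∈ M.edgeSet := SimpleGraph.Subgraph.mem_edgeSet.mpr hw
      by_cases hmem : s(v, w) ∈ Mx
      · exact Or.inl (hSxI hmem (Sym2.mem_mk_left v w))
      · exact Or.inr (hSyI (hMyI he hmem) (Sym2.mem_mk_left v w))
    · rintro (h | h)
      · obtain ⟨e, he, hve⟩ := hSxE h
        obtain ⟨u, -, hadj⟩ := aux_mem_edge (hMxsub he) hve
        exact M.edge_vert hadj
      · obtain ⟨e, he, hve⟩ := hSyE h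
        obtain ⟨u, -, hadj⟩ := aux_mem_edge (hMysub he) hve
        exact M.edge_vert hadj
  have hSxM : Sx ⊆ M.verts := by rw [hverts]; exact Set.subset_union_left
  have hSyM : Sy ⊆ M.verts := by rw [hverts]; exact Set.subset_union_right
  have hxSx : x ∉ Sx := fun h => hxM (hSxM h)
  have hxSy : x ∉ Sy := fun h => hxM (hSyM h)
  have hx'Sxv : x' ∉ Sx := fun h => hx'M (hSxM h)
  have hx'Sy : x' ∉ Sy := fun h => hx'M (hSyM h)
  have hdisjXY : ∀ v, v ∈ Sx → v ∈ Sy → False := by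
    intro v hvx hvy
    obtain ⟨e, he, hve⟩ := hSxE hvx
    obtain ⟨f, hf, hvf⟩ := hSyE hvy
    exact (hMyE hf).2 (hpd e (hMxsub he) f (hMysub hf) v hve hvf ▸ he)
  -- augmentation kills maximality
  have hbig : ∀ (R : Set (Sym2 V)), R ⊆ M.edgeSet → ∀ (P : (UGraph A).Subgraph),
      P.IsMatching → (∀ v ∈ P.support, (∃ e ∈ R, v ∈ e) ∨ v ∉ M.verts) →
      R.ncard < P.edgeSet.ncard → False := by
    intro R hR P hP hs hc
    obtain ⟨M', hM', hlt⟩ := aux_augment hM R hR P hP hs hc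
    have := hmax M' hM'
    omega
  have hsupmem : ∀ (H H' : (UGraph A).Subgraph) (v : V), v ∈ (H ⊔ H').support →
      v ∈ H.support ∨ v ∈ H'.support := by
    intro H H' v hv
    rw [SimpleGraph.Subgraph.mem_support] at hv
    obtain ⟨w, hw⟩ := hv
    rw [SimpleGraph.Subgraph.sup_adj] at hw
    rcases hw with h | h
    · exact Or.inl ⟨w, h⟩
    · exact Or.inr ⟨w, h⟩
  -- x and x' are not adjacent
  have hxx'nadj : ¬ (UGraph A).Adj x x' := by
    intro h
    refine hbig ∅ (Set.empty_subset _) ((UGraph A).subgraphOfAdj h)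
      (SimpleGraph.Subgraph.IsMatching.subgraphOfAdj h) ?_ ?_
    · intro v hv
      rw [SimpleGraph.support_subgraphOfAdj] at hv
      right
      rcases hv with rfl | rfl
      · exact hxM
      · exact hx'M
    · rw [SimpleGraph.edgeSet_subgraphOfAdj]
      simp
  -- all neighbors of x lie in Sx
  have hNx : ∀ w, (UGraph A).Adj x w → w ∈ Sx := by
    intro w hw
    have hwM : w ∈ M.verts := by
      by_contra h
      rcases (hvnm w).mp h with rfl | rfl
      · exact hw.ne rfl
      · exact hxx'nadj hw
    obtain ⟨u, hu, -⟩ := hM hwM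
    exact hSxI (hMxI (SimpleGraph.Subgraph.mem_edgeSet.mpr hu)
      ⟨w, Sym2.mem_mk_left w u, hw⟩) (Sym2.mem_mk_left w u)
  have hxout : {w | A x w} = Sx := by
    refine Set.eq_of_subset_of_ncard_le ?_ ?_ (Set.toFinite _)
    · intro w hw
      exact hNx w ⟨hAne hw, Or.inl hw⟩
    · rw [hSxcard]; exact (hdel x).1
  have hxin : {w | A w x} = Sx := by
    refine Set.eq_of_subset_of_ncard_le ?_ ?_ (Set.toFinite _)
    · intro w hw
      exact hNx w ⟨(hAne hw).symm, Or.inr hw⟩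
    · rw [hSxcard]; exact (hdel x).2
  have hxall : ∀ w ∈ Sx, A x w ∧ A w x := by
    intro w hw
    constructor
    · have h : w ∈ {w | A x w} := by rw [hxout]; exact hw
      exact h
    · have h : w ∈ {w | A w x} := by rw [hxin]; exact hw
      exact h
  -- x' is not adjacent to Sx
  have hx'Sx : ∀ u, u ∈ Sx → ¬ (UGraph A).Adj x' u := by
    intro u huSx hadj
    obtain ⟨e, heMx, hue⟩ := hSxE huSx
    obtain ⟨v, rfl, huv⟩ := aux_mem_edge (hMxsub heMx) hue
    have hvSx : v ∈ Sx := hSxI heMx (Sym2.mem_mk_right u v)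
    have huv' : u ≠ v := (M.adj_sub huv).ne
    have hxu : x ≠ u := fun h => hxSx (h ▸ huSx)
    have hxv : x ≠ v := fun h => hxSx (h ▸ hvSx)
    have hx'u : x' ≠ u := fun h => hx'Sxv (h ▸ huSx)
    have hx'v : x' ≠ v := fun h => hx'Sxv (h ▸ hvSx)
    have hadj2 : (UGraph A).Adj x v := ⟨hxv, Or.inl (hxall v hvSx).1⟩
    refine hbig {s(u, v)} ?_
      ((UGraph A).subgraphOfAdj hadj ⊔ (UGraph A).subgraphOfAdj hadj2) ?_ ?_ ?_
    · intro f hf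
      rw [Set.mem_singleton_iff] at hf
      subst hf
      exact hMxsub heMx
    · refine (SimpleGraph.Subgraph.IsMatching.subgraphOfAdj hadj).sup
        (SimpleGraph.Subgraph.IsMatching.subgraphOfAdj hadj2) ?_
      rw [SimpleGraph.support_subgraphOfAdj, SimpleGraph.support_subgraphOfAdj,
        Set.disjoint_left]
      intro w hw hw2
      simp only [Set.mem_insert_iff, Set.mem_singleton_iff] at hw hw2
      rcases hw with rfl | rfl
      · rcases hw2 with h | h
        · exact hxx h.symm
        · exact hx'v h
      · rcases hw2 with h | h
        · exact hxu h.symm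
        · exact huv' h
    · intro v' hv'
      rcases hsupmem _ _ v' hv' with h | h <;>
        rw [SimpleGraph.support_subgraphOfAdj] at h <;>
        simp only [Set.mem_insert_iff, Set.mem_singleton_iff] at h
      · rcases h with h | h <;> rw [h]
        · exact Or.inr hx'M
        · exact Or.inl ⟨s(u, v), Set.mem_singleton _, Sym2.mem_mk_left u v⟩
      · rcases h with h | h <;> rw [h]
        · exact Or.inr hxM
        · exact Or.inl ⟨s(u, v), Set.mem_singleton _, Sym2.mem_mk_right u v⟩
    · rw [SimpleGraph.Subgraph.edgeSet_sup, SimpleGraph.edgeSet_subgraphOfAdj,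
        SimpleGraph.edgeSet_subgraphOfAdj, Set.singleton_union]
      have hne : s(x', u) ≠ s(x, v) := by
        intro h
        rw [Sym2.eq_iff] at h
        rcases h with ⟨h1, -⟩ | ⟨h1, -⟩
        · exact hxx h1.symm
        · exact hx'v h1
      rw [Set.ncard_singleton,
        Set.ncard_insert_of_notMem (by simpa using hne) (Set.toFinite _),
        Set.ncard_singleton]
      omega
  -- all neighbors of x' lie in Sy
  have hNx' : ∀ w, (UGraph A).Adj x' w → w ∈ Sy := by
    intro w hw
    have hwM : w ∈ M.verts := by
      by_contra h
      rcases (hvnm w).mp h with rfl | rfl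
      · exact hxx'nadj hw.symm
      · exact hw.ne rfl
    rw [hverts] at hwM
    rcases hwM with h | h
    · exact absurd hw (hx'Sx w h)
    · exact h
  have hx'out : {w | A x' w} = Sy := by
    refine Set.eq_of_subset_of_ncard_le ?_ ?_ (Set.toFinite _)
    · intro w hw
      exact hNx' w ⟨hAne hw, Or.inl hw⟩
    · rw [hSycard]; exact (hdel x').1
  have hx'in : {w | A w x'} = Sy := by
    refine Set.eq_of_subset_of_ncard_le ?_ ?_ (Set.toFinite _)
    · intro w hw
      exact hNx' w ⟨(hAne hw).symm, Or.inr hw⟩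
    · rw [hSycard]; exact (hdel x').2
  have hx'all : ∀ w ∈ Sy, A x' w ∧ A w x' := by
    intro w hw
    constructor
    · have h : w ∈ {w | A x' w} := by rw [hx'out]; exact hw
      exact h
    · have h : w ∈ {w | A w x'} := by rw [hx'in]; exact hw
      exact h
  -- no edges between Sx and Sy
  have hcross : ∀ u ∈ Sx, ∀ w ∈ Sy, ¬ (UGraph A).Adj u w := by
    intro u huSx w hwSy hadj
    obtain ⟨e, heMx, hue⟩ := hSxE huSx
    obtain ⟨f, hfMy, hwf⟩ := hSyE hwSy
    obtain ⟨v, rfl, huv⟩ := aux_mem_edge (hMxsub heMx) hue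
    obtain ⟨z, rfl, hwz⟩ := aux_mem_edge (hMysub hfMy) hwf
    have hvSx : v ∈ Sx := hSxI heMx (Sym2.mem_mk_right u v)
    have hzSy : z ∈ Sy := hSyI hfMy (Sym2.mem_mk_right w z)
    have huv' : u ≠ v := (M.adj_sub huv).ne
    have hwz' : w ≠ z := (M.adj_sub hwz).ne
    have huw : u ≠ w := fun h => hdisjXY w (h ▸ huSx) hwSy
    have huz : u ≠ z := fun h => hdisjXY z (h ▸ huSx) hzSy
    have hvw : v ≠ w := fun h => hdisjXY w (h ▸ hvSx) hwSy
    have hvz : v ≠ z := fun h => hdisjXY z (h ▸ hvSx) hzSy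
    have hxu : x ≠ u := fun h => hxSx (h ▸ huSx)
    have hxv : x ≠ v := fun h => hxSx (h ▸ hvSx)
    have hxw : x ≠ w := fun h => hxSy (h ▸ hwSy)
    have hxz : x ≠ z := fun h => hxSy (h ▸ hzSy)
    have hx'u : x' ≠ u := fun h => hx'Sxv (h ▸ huSx)
    have hx'v : x' ≠ v := fun h => hx'Sxv (h ▸ hvSx)
    have hx'w : x' ≠ w := fun h => hx'Sy (h ▸ hwSy)
    have hx'z : x' ≠ z := fun h => hx'Sy (h ▸ hzSy)
    have hadjxv : (UGraph A).Adj x v := ⟨hxv, Or.inl (hxall v hvSx).1⟩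
    have hadjzx' : (UGraph A).Adj z x' := ⟨hx'z.symm, Or.inl (hx'all z hzSy).2⟩
    have hef : s(u, v) ≠ s(w, z) := by
      intro h
      rw [Sym2.eq_iff] at h
      rcases h with ⟨h1, -⟩ | ⟨h1, -⟩
      · exact huw h1
      · exact huz h1
    refine hbig {s(u, v), s(w, z)} ?_
      (((UGraph A).subgraphOfAdj hadjxv ⊔ (UGraph A).subgraphOfAdj hadj) ⊔
        (UGraph A).subgraphOfAdj hadjzx') ?_ ?_ ?_
    · intro g hg
      simp only [Set.mem_insert_iff, Set.mem_singleton_iff] at hg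
      rcases hg with rfl | rfl
      · exact hMxsub heMx
      · exact hMysub hfMy
    · refine SimpleGraph.Subgraph.IsMatching.sup ?_
        (SimpleGraph.Subgraph.IsMatching.subgraphOfAdj hadjzx') ?_
      · refine (SimpleGraph.Subgraph.IsMatching.subgraphOfAdj hadjxv).sup
          (SimpleGraph.Subgraph.IsMatching.subgraphOfAdj hadj) ?_
        rw [SimpleGraph.support_subgraphOfAdj, SimpleGraph.support_subgraphOfAdj,
          Set.disjoint_left]
        intro a ha ha2
        simp only [Set.mem_insert_iff, Set.mem_singleton_iff] at ha ha2
        rcases ha with rfl | rfl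
        · rcases ha2 with h | h
          · exact hxu h
          · exact hxw h
        · rcases ha2 with h | h
          · exact huv' h.symm
          · exact hvw h
      · rw [Set.disjoint_left]
        intro a ha ha2
        rw [SimpleGraph.support_subgraphOfAdj] at ha2
        simp only [Set.mem_insert_iff, Set.mem_singleton_iff] at ha2
        rcases hsupmem _ _ a ha with h | h <;>
          rw [SimpleGraph.support_subgraphOfAdj] at h <;>
          simp only [Set.mem_insert_iff, Set.mem_singleton_iff] at h
        · rcases h with rfl | rfl
          · rcases ha2 with h2 | h2
            · exact hxz h2
            · exact hxx h2
          · rcases ha2 with h2 | h2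
            · exact hvz h2
            · exact hx'v h2.symm
        · rcases h with rfl | rfl
          · rcases ha2 with h2 | h2
            · exact huz h2
            · exact hx'u h2.symm
          · rcases ha2 with h2 | h2
            · exact hwz' h2
            · exact hx'w h2.symm
    · intro a ha
      rcases hsupmem _ _ a ha with h | h
      · rcases hsupmem _ _ a h with h2 | h2 <;>
          rw [SimpleGraph.support_subgraphOfAdj] at h2 <;>
          simp only [Set.mem_insert_iff, Set.mem_singleton_iff] at h2
        · rcases h2 with h2 | h2 <;> rw [h2]
          · exact Or.inr hxM
          · exact Or.inl ⟨s(u, v), Or.inl rfl, Sym2.mem_mk_right u v⟩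
        · rcases h2 with h2 | h2 <;> rw [h2]
          · exact Or.inl ⟨s(u, v), Or.inl rfl, Sym2.mem_mk_left u v⟩
          · exact Or.inl ⟨s(w, z), Or.inr rfl, Sym2.mem_mk_left w z⟩
      · rw [SimpleGraph.support_subgraphOfAdj] at h
        simp only [Set.mem_insert_iff, Set.mem_singleton_iff] at h
        rcases h with h | h <;> rw [h]
        · exact Or.inl ⟨s(w, z), Or.inr rfl, Sym2.mem_mk_right w z⟩
        · exact Or.inr hx'M
    · rw [SimpleGraph.Subgraph.edgeSet_sup, SimpleGraph.Subgraph.edgeSet_sup,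
        SimpleGraph.edgeSet_subgraphOfAdj, SimpleGraph.edgeSet_subgraphOfAdj,
        SimpleGraph.edgeSet_subgraphOfAdj]
      have h1 : s(x, v) ≠ s(u, w) := by
        intro h
        rw [Sym2.eq_iff] at h
        rcases h with ⟨hq, -⟩ | ⟨hq, -⟩
        · exact hxu hq
        · exact hxw hq
      have h2 : s(x, v) ≠ s(z, x') := by
        intro h
        rw [Sym2.eq_iff] at h
        rcases h with ⟨hq, -⟩ | ⟨hq, -⟩
        · exact hxz hq
        · exact hxx hq
      have h3 : s(u, w) ≠ s(z, x') := by
        intro h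
        rw [Sym2.eq_iff] at h
        rcases h with ⟨hq, -⟩ | ⟨hq, -⟩
        · exact huz hq
        · exact hx'u hq.symm
      have hset : ({s(x, v)} ∪ {s(u, w)}) ∪ {s(z, x')}
          = ({s(x, v), s(u, w), s(z, x')} : Set (Sym2 V)) := by
        ext g
        simp only [Set.mem_union, Set.mem_singleton_iff, Set.mem_insert_iff]
        tauto
      rw [hset, Set.ncard_pair hef]
      rw [Set.ncard_insert_of_notMem (by
          simp only [Set.mem_insert_iff, Set.mem_singleton_iff]
          rintro (h | h)
          · exact h1 h
          · exact h2 h) (Set.toFinite _),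
        Set.ncard_pair h3]
      omega
  -- each vertex of Sx ∪ {x} dominates everything else in Sx ∪ {x}
  have hcardUX : (Sx ∪ {x}).ncard = m + 1 := by
    rw [Set.union_singleton, Set.ncard_insert_of_notMem hxSx (Set.toFinite _), hSxcard]
  have hcardUY : (Sy ∪ {x'}).ncard = m + 1 := by
    rw [Set.union_singleton, Set.ncard_insert_of_notMem hx'Sy (Set.toFinite _), hSycard]
  have houtX : ∀ a, a ∈ Sx ∪ {x} → {w | A a w} = (Sx ∪ {x}) \ {a} := by
    intro a ha
    refine Set.eq_of_subset_of_ncard_le ?_ ?_ (Set.toFinite _)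
    · intro w hw
      have hw : A a w := hw
      have hwa : w ≠ a := fun h => hirr a (h ▸ hw)
      refine ⟨?_, hwa⟩
      rcases ha with haSx | hax
      · have haw : (UGraph A).Adj a w := ⟨hAne hw, Or.inl hw⟩
        by_cases hwM : w ∈ M.verts
        · rw [hverts] at hwM
          rcases hwM with h | h
          · exact Or.inl h
          · exact (hcross a haSx w h haw).elim
        · rcases (hvnm w).mp hwM with rfl | rfl
          · exact Or.inr rfl
          · exact (hx'Sx a haSx haw.symm).elim
      · rw [Set.mem_singleton_iff] at hax
        subst hax
        exact Or.inl (hNx w ⟨hAne hw, Or.inl hw⟩)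
    · rw [Set.ncard_diff_singleton_of_mem ha, hcardUX]
      simpa using (hdel a).1
  have houtY : ∀ a, a ∈ Sy ∪ {x'} → {w | A a w} = (Sy ∪ {x'}) \ {a} := by
    intro a ha
    refine Set.eq_of_subset_of_ncard_le ?_ ?_ (Set.toFinite _)
    · intro w hw
      have hw : A a w := hw
      have hwa : w ≠ a := fun h => hirr a (h ▸ hw)
      refine ⟨?_, hwa⟩
      rcases ha with haSy | hax'
      · have haw : (UGraph A).Adj a w := ⟨hAne hw, Or.inl hw⟩
        by_cases hwM : w ∈ M.verts
        · rw [hverts] at hwM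
          rcases hwM with h | h
          · exact (hcross w h a haSy haw.symm).elim
          · exact Or.inl h
        · rcases (hvnm w).mp hwM with rfl | rfl
          · exact (hdisjXY a (hNx a haw.symm) haSy).elim
          · exact Or.inr rfl
      · rw [Set.mem_singleton_iff] at hax'
        subst hax'
        exact Or.inl (hNx' w ⟨hAne hw, Or.inl hw⟩)
    · rw [Set.ncard_diff_singleton_of_mem ha, hcardUY]
      simpa using (hdel a).1
  refine ⟨hcardUX, hcardUY, ?_, ?_, ?_⟩
  · intro a ha b hb hne
    have h := houtX a ha
    have hb2 : b ∈ {w | A a w} := by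
      rw [h]
      exact ⟨hb, fun hh => hne (Set.mem_singleton_iff.mp hh).symm⟩
    exact hb2
  · intro a ha b hb hne
    have h := houtY a ha
    have hb2 : b ∈ {w | A a w} := by
      rw [h]
      exact ⟨hb, fun hh => hne (Set.mem_singleton_iff.mp hh).symm⟩
    exact hb2
  · intro a ha b hb
    have key : a ≠ b ∧ ¬ (UGraph A).Adj a b := by
      rcases ha with haSx | hax
      · rcases hb with hbSy | hbx'
        · refine ⟨?_, fun h => hcross a haSx b hbSy h⟩
          rintro rfl
          exact hdisjXY a haSx hbSy
        · rw [Set.mem_singleton_iff] at hbx'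
          subst hbx'
          refine ⟨?_, fun h => hx'Sx a haSx h.symm⟩
          rintro rfl
          exact hx'Sxv haSx
      · rw [Set.mem_singleton_iff] at hax
        subst hax
        rcases hb with hbSy | hbx'
        · refine ⟨?_, fun h => hdisjXY b (hNx b h) hbSy⟩
          rintro rfl
          exact hxSy hbSy
        · rw [Set.mem_singleton_iff] at hbx'
          subst hbx'
          exact ⟨hxx, hxx'nadj⟩
    exact ⟨fun h => key.2 ⟨key.1, Or.inl h⟩, fun h => key.2 ⟨key.1, Or.inr h⟩⟩
end

section
/- Let H be a digraph whose underlying graph has a maximum matching M with |M| = m ≥ 1, let the uncovered set X satisfy |X| ≥ 3 and δ⁰(H) ≥ m. Then there is no edge e = [u,v] ∈ M and vertex x₁ ∈ X such that both u and v are adjacent to x₁. -/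
open SimpleGraph

/-- If two uncovered vertices are adjacent, we can enlarge the matching by one edge. -/
lemma aug_indep {V : Type*} [Fintype V] {G : SimpleGraph V} {M : G.Subgraph}
    (hM : M.IsMatching) {x y : V} (hx : x ∉ M.verts) (hy : y ∉ M.verts)
    (hxy : G.Adj x y) :
    ∃ M' : G.Subgraph, M'.IsMatching ∧ M.edgeSet.ncard + 1 ≤ M'.edgeSet.ncard := by
  classical
  refine ⟨M ⊔ G.subgraphOfAdj hxy, ?_, ?_⟩
  · apply hM.sup (Subgraph.IsMatching.subgraphOfAdj hxy)
    refine Disjoint.mono (Subgraph.support_subset_verts _) (Subgraph.support_subset_verts _) ?_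
    rw [Set.disjoint_right]
    intro z hz
    rcases hz with rfl | rfl
    · exact hx
    · exact hy
  · have he : s(x, y) ∉ M.edgeSet := fun h => hx (M.edge_vert (Subgraph.mem_edgeSet.mp h))
    rw [Subgraph.edgeSet_sup, SimpleGraph.edgeSet_subgraphOfAdj,
      Set.ncard_union_eq (Set.disjoint_singleton_right.mpr he) (Set.toFinite _) (Set.toFinite _),
      Set.ncard_singleton]

/-- Matching surgery: if `[a,b]` is a matching edge and `x, y` are distinct uncovered
vertices with `x ~ a` and `y ~ b`, we can enlarge the matching by one edge. -/
lemma aug_two {V : Type*} [Fintype V] {G : SimpleGraph V} {M : G.Subgraph}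
    (hM : M.IsMatching) {a b x y : V} (hab : M.Adj a b)
    (hx : x ∉ M.verts) (hy : y ∉ M.verts) (hxy : x ≠ y)
    (hxa : G.Adj x a) (hyb : G.Adj y b) :
    ∃ M' : G.Subgraph, M'.IsMatching ∧ M.edgeSet.ncard + 1 ≤ M'.edgeSet.ncard := by
  classical
  have ha : a ∈ M.verts := M.edge_vert hab
  have hb : b ∈ M.verts := M.edge_vert hab.symm
  have hne_ab : a ≠ b := (M.adj_sub hab).ne
  have hxa' : x ≠ a := fun h => hx (h ▸ ha)
  have hxb' : x ≠ b := fun h => hx (h ▸ hb)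
  have hya' : y ≠ a := fun h => hy (h ▸ ha)
  have hyb' : y ≠ b := fun h => hy (h ▸ hb)
  have uniq : ∀ {p q r : V}, M.Adj p q → M.Adj p r → q = r := by
    intro p q r h1 h2
    exact ((hM (M.edge_vert h1)).unique h1 h2)
  set M₀ := M.deleteVerts {a, b} with hM₀def
  have hM₀ : M₀.IsMatching := by
    intro v hv
    rw [hM₀def, Subgraph.deleteVerts_verts] at hv
    obtain ⟨hvM, hvab⟩ := hv
    obtain ⟨w, hw, hwu⟩ := hM hvM
    refine ⟨w, ?_, ?_⟩
    · show (M.deleteVerts {a, b}).Adj v w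
      rw [Subgraph.deleteVerts_adj]
      refine ⟨hvM, hvab, M.edge_vert hw.symm, ?_, hw⟩
      intro hwab
      rcases hwab with rfl | rfl
      · exact hvab (by rw [uniq hw.symm hab]; exact Set.mem_insert_of_mem _ rfl)
      · exact hvab (by rw [uniq hw.symm hab.symm]; exact Set.mem_insert _ _)
    · intro w' hw'
      rw [hM₀def, Subgraph.deleteVerts_adj] at hw'
      exact hwu w' hw'.2.2.2.2
  set E₁ := G.subgraphOfAdj hxa with hE₁def
  set E₂ := G.subgraphOfAdj hyb with hE₂def
  have hd0 : Disjoint M₀.support E₁.support := by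
    refine Disjoint.mono (Subgraph.support_subset_verts _) (Subgraph.support_subset_verts _) ?_
    rw [hM₀def, hE₁def, Subgraph.deleteVerts_verts, subgraphOfAdj_verts, Set.disjoint_right]
    intro z hz
    rcases hz with rfl | rfl
    · exact fun h => hx h.1
    · exact fun h => h.2 (Set.mem_insert _ _)
  have hM₁ : (M₀ ⊔ E₁).IsMatching := hM₀.sup (Subgraph.IsMatching.subgraphOfAdj hxa) hd0
  have hd1 : Disjoint (M₀ ⊔ E₁).support E₂.support := by
    refine Disjoint.mono (Subgraph.support_subset_verts _) (Subgraph.support_subset_verts _) ?_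
    rw [Subgraph.verts_sup, hM₀def, hE₁def, hE₂def, Subgraph.deleteVerts_verts,
      subgraphOfAdj_verts, subgraphOfAdj_verts, Set.disjoint_right]
    intro z hz
    rcases hz with rfl | rfl
    · rintro (h | h)
      · exact hy h.1
      · rcases h with rfl | rfl
        · exact hxy rfl
        · exact hya' rfl
    · rintro (h | h)
      · exact h.2 (Set.mem_insert_of_mem _ rfl)
      · rcases h with rfl | rfl
        · exact hxb' rfl
        · exact hne_ab rfl
  refine ⟨M₀ ⊔ E₁ ⊔ E₂, hM₁.sup (Subgraph.IsMatching.subgraphOfAdj hyb) hd1, ?_⟩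
  have h1 : s(x, a) ∉ M.edgeSet := fun h => hx (M.edge_vert (Subgraph.mem_edgeSet.mp h))
  have h2 : s(y, b) ∉ M.edgeSet := fun h => hy (M.edge_vert (Subgraph.mem_edgeSet.mp h))
  have habE : s(a, b) ∈ M.edgeSet := Subgraph.mem_edgeSet.mpr hab
  have hne_e : s(x, a) ≠ s(y, b) := by
    intro h
    rw [Sym2.eq_iff] at h
    rcases h with ⟨rfl, rfl⟩ | ⟨rfl, rfl⟩
    · exact hxy rfl
    · exact hxb' rfl
  have hsub : (M.edgeSet \ {s(a, b)}) ∪ {s(x, a), s(y, b)} ⊆ (M₀ ⊔ E₁ ⊔ E₂).edgeSet := by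
    rw [Subgraph.edgeSet_sup, Subgraph.edgeSet_sup]
    rintro e (⟨heE, hene⟩ | he)
    · left; left
      induction e with
      | h p q =>
        rw [Subgraph.mem_edgeSet] at heE ⊢
        rw [hM₀def, Subgraph.deleteVerts_adj]
        have hpab : p ∉ ({a, b} : Set V) := by
          rintro (rfl | rfl)
          · exact hene (by rw [uniq heE hab]; rfl)
          · exact hene (by rw [uniq heE hab.symm]; exact Sym2.eq_swap)
        have hqab : q ∉ ({a, b} : Set V) := by
          rintro (rfl | rfl)
          · exact hene (by rw [uniq heE.symm hab]; exact Sym2.eq_swap)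
          · exact hene (by rw [uniq heE.symm hab.symm]; rfl)
        exact ⟨M.edge_vert heE, hpab, M.edge_vert heE.symm, hqab, heE⟩
    · rcases he with rfl | rfl
      · left; right
        rw [hE₁def, SimpleGraph.edgeSet_subgraphOfAdj]; rfl
      · right
        rw [hE₂def, SimpleGraph.edgeSet_subgraphOfAdj]; rfl
  have hdisj : Disjoint (M.edgeSet \ {s(a, b)}) {s(x, a), s(y, b)} := by
    rw [Set.disjoint_right]
    rintro e (rfl | rfl)
    · exact fun h => h1 h.1
    · exact fun h => h2 h.1
  have hScard : ((M.edgeSet \ {s(a, b)}) ∪ {s(x, a), s(y, b)}).ncard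
      = (M.edgeSet.ncard - 1) + 2 := by
    rw [Set.ncard_union_eq hdisj (Set.toFinite _) (Set.toFinite _),
      Set.ncard_diff_singleton_of_mem habE, Set.ncard_pair hne_e]
  have hpos : 1 ≤ M.edgeSet.ncard := (Set.ncard_pos (Set.toFinite _)).mpr ⟨_, habE⟩
  have hle := Set.ncard_le_ncard hsub (Set.toFinite _)
  omega

/-- when `|X| ≥ 3` and `δ⁰(H) ≥ m`, no matching edge has both
endpoints adjacent to a common uncovered vertex. -/
theorem stmt_16 {V : Type*} [Fintype V] (A : V → V → Prop) (hirr : ∀ v, ¬ A v v)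
    (M : (UGraph A).Subgraph) (hM : M.IsMatching)
    (hmax : ∀ M' : (UGraph A).Subgraph, M'.IsMatching →
      M'.edgeSet.ncard ≤ M.edgeSet.ncard)
    (m : ℕ) (hm : M.edgeSet.ncard = m) (hpos : 1 ≤ m)
    (hX : 3 ≤ (M.vertsᶜ).ncard)
    (hdel : ∀ v : V, m ≤ {w | A v w}.ncard ∧ m ≤ {w | A w v}.ncard) :
    ¬ ∃ (u v x₁ : V), M.Adj u v ∧ x₁ ∈ M.vertsᶜ ∧
      (UGraph A).Adj u x₁ ∧ (UGraph A).Adj v x₁ := by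
  classical
  rintro ⟨u, v, x₁, huv, hx₁, hux₁, hvx₁⟩
  have hx₁' : x₁ ∉ M.verts := hx₁
  have hnoaug : ∀ M' : (UGraph A).Subgraph, M'.IsMatching →
      ¬ (M.edgeSet.ncard + 1 ≤ M'.edgeSet.ncard) := by
    intro M' h1 h2
    have := hmax M' h1
    omega
  have hind : ∀ {p q : V}, p ∉ M.verts → q ∉ M.verts → ¬ (UGraph A).Adj p q := by
    intro p q hp hq hadj
    obtain ⟨M', h1, h2⟩ := aug_indep hM hp hq hadj
    exact hnoaug M' h1 h2
  have claimA : ∀ {a b p q : V}, M.Adj a b → p ∉ M.verts → q ∉ M.verts → p ≠ q →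
      (UGraph A).Adj p a → (UGraph A).Adj q b → False := by
    intro a b p q hab hp hq hpq hpa hqb
    obtain ⟨M', h1, h2⟩ := aug_two hM hab hp hq hpq hpa hqb
    exact hnoaug M' h1 h2
  -- the set of matching edges both of whose endpoints are adjacent to `p`
  set D : V → Set (Sym2 V) := fun p => {e | e ∈ M.edgeSet ∧ ∀ z ∈ e, (UGraph A).Adj p z}
    with hDdef
  have claimA' : ∀ {p q : V} {e : Sym2 V}, p ∉ M.verts → q ∉ M.verts → p ≠ q →
      e ∈ D p → ∀ z ∈ e, ¬ (UGraph A).Adj q z := by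
    intro p q e hp hq hpq he z hz hadj
    obtain ⟨hee, hall⟩ := he
    obtain ⟨w, rfl⟩ := Sym2.mem_iff_exists.mp hz
    rw [Subgraph.mem_edgeSet] at hee
    exact claimA hee hq hp (Ne.symm hpq) hadj (hall w (Sym2.mem_mk_right _ _))
  -- key counting inequality
  have hkey : ∀ p q r : V, p ∉ M.verts → q ∉ M.verts → r ∉ M.verts →
      p ≠ q → p ≠ r → q ≠ r → (D q).ncard + (D r).ncard ≤ (D p).ncard := by
    intro p q r hp hq hr hpq hpr hqr
    have hNm : m ≤ {w | A p w}.ncard := (hdel p).1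
    have hNM : ∀ w, A p w → w ∈ M.verts := by
      intro w hw
      by_contra hwM
      have hne : p ≠ w := fun h => hirr p (h ▸ hw)
      exact hind hp hwM (show p ≠ w ∧ (A p w ∨ A w p) from ⟨hne, Or.inl hw⟩)
    set F : V → Sym2 V := fun w =>
      if h : w ∈ M.verts then s(w, (hM h).choose) else s(w, w) with hFdef'
    have hFdef : ∀ w (h : w ∈ M.verts), F w = s(w, (hM h).choose) := by
      intro w h; rw [hFdef']; exact dif_pos h
    have hFadj : ∀ w (h : w ∈ M.verts), M.Adj w ((hM h).choose) :=
      fun w h => (hM h).choose_spec.1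
    have sNfin : ({w | A p w} : Set V).Finite := Set.toFinite _
    have tfin : (M.edgeSet \ (D q ∪ D r)).Finite := Set.toFinite _
    set sN := sNfin.toFinset with hsNdef
    set t := tfin.toFinset with htdef
    have hmapsto : ∀ w, A p w → F w ∈ M.edgeSet \ (D q ∪ D r) := by
      intro w hw
      have hwM := hNM w hw
      have hadjpw : (UGraph A).Adj p w := (show p ≠ w ∧ (A p w ∨ A w p) from ⟨fun h => hp (h ▸ hwM), Or.inl hw⟩)
      have hwe : w ∈ F w := by rw [hFdef w hwM]; exact Sym2.mem_mk_left _ _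
      refine ⟨?_, ?_⟩
      · rw [hFdef w hwM]
        exact Subgraph.mem_edgeSet.mpr (hFadj w hwM)
      · rintro (hDq | hDr)
        · exact claimA' hq hp (Ne.symm hpq) hDq w hwe hadjpw
        · exact claimA' hr hp (Ne.symm hpr) hDr w hwe hadjpw
    have hcount : sN.card = ∑ e ∈ t, (sN.filter fun w => F w = e).card := by
      apply Finset.card_eq_sum_card_fiberwise
      intro w hw
      rw [hsNdef, Finset.mem_coe, Set.Finite.mem_toFinset] at hw
      rw [htdef, Finset.mem_coe, Set.Finite.mem_toFinset]
      exact hmapsto w hw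
    have hfib : ∀ e ∈ t, (sN.filter fun w => F w = e).card ≤ if e ∈ D p then 2 else 1 := by
      intro e
      induction e using Sym2.ind with
      | _ a b =>
        intro het
        rw [htdef, Set.Finite.mem_toFinset] at het
        obtain ⟨heE, _⟩ := het
        have hMab : M.Adj a b := Subgraph.mem_edgeSet.mp heE
        have hmm : ∀ w ∈ sN.filter (fun w => F w = s(a, b)), w ∈ s(a, b) ∧ A p w := by
          intro w hw
          rw [Finset.mem_filter, hsNdef, Set.Finite.mem_toFinset] at hw
          refine ⟨hw.2 ▸ ?_, hw.1⟩
          rw [hFdef w (hNM w hw.1)]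
          exact Sym2.mem_mk_left _ _
        split_ifs with hDp
        · calc (sN.filter fun w => F w = s(a, b)).card
              ≤ ({a, b} : Finset V).card := by
                apply Finset.card_le_card
                intro w hw
                rcases Sym2.mem_iff.mp (hmm w hw).1 with rfl | rfl
                · exact Finset.mem_insert_self _ _
                · exact Finset.mem_insert_of_mem (Finset.mem_singleton_self _)
            _ ≤ 2 := (Finset.card_insert_le _ _).trans (by simp)
        · rw [Finset.card_le_one]
          intro w1 hw1 w2 hw2
          by_contra hne
          obtain ⟨hw1m, hw1A⟩ := hmm w1 hw1
          obtain ⟨hw2m, hw2A⟩ := hmm w2 hw2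
          have hpaA : A p a ∧ A p b := by
            rcases Sym2.mem_iff.mp hw1m with rfl | rfl <;>
              rcases Sym2.mem_iff.mp hw2m with rfl | rfl
            · exact absurd rfl hne
            · exact ⟨hw1A, hw2A⟩
            · exact ⟨hw2A, hw1A⟩
            · exact absurd rfl hne
          refine hDp ⟨heE, ?_⟩
          intro z hz
          rcases Sym2.mem_iff.mp hz with rfl | rfl
          · exact (show p ≠ z ∧ (A p z ∨ A z p) from ⟨fun h => hp (h ▸ M.edge_vert hMab), Or.inl hpaA.1⟩)
          · exact (show p ≠ z ∧ (A p z ∨ A z p) from ⟨fun h => hp (h ▸ M.edge_vert hMab.symm), Or.inl hpaA.2⟩)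
    have hsum : ∑ e ∈ t, (if e ∈ D p then 2 else 1)
        = (t.filter (· ∈ D p)).card + t.card := by
      calc ∑ e ∈ t, (if e ∈ D p then 2 else 1)
          = ∑ e ∈ t, ((if e ∈ D p then 1 else 0) + 1) := by
            apply Finset.sum_congr rfl
            intro e _
            split_ifs <;> rfl
        _ = (∑ e ∈ t, if e ∈ D p then 1 else 0) + ∑ e ∈ t, 1 := Finset.sum_add_distrib
        _ = (t.filter (· ∈ D p)).card + t.card := by
            rw [← Finset.card_filter, Finset.sum_const, smul_eq_mul, mul_one]
    have hfiltle : (t.filter (· ∈ D p)).card ≤ (D p).ncard := by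
      rw [Set.ncard_eq_toFinset_card (D p) (Set.toFinite _)]
      apply Finset.card_le_card
      intro e he
      rw [Set.Finite.mem_toFinset]
      exact (Finset.mem_filter.mp he).2
    have hNcard : {w | A p w}.ncard = sN.card := Set.ncard_eq_toFinset_card _ sNfin
    have htcard : (M.edgeSet \ (D q ∪ D r)).ncard = t.card :=
      Set.ncard_eq_toFinset_card _ tfin
    have hunion_sub : D q ∪ D r ⊆ M.edgeSet := by
      rintro e (he | he) <;> exact he.1
    have hsplit := Set.ncard_diff_add_ncard_of_subset hunion_sub (Set.toFinite _)
    have hdisjqr : Disjoint (D q) (D r) := by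
      rw [Set.disjoint_left]
      intro e heq her
      obtain ⟨heE, hallr⟩ := her
      exact claimA' hq hr hqr heq _ (Sym2.out_fst_mem e) (hallr _ (Sym2.out_fst_mem e))
    have huncard : (D q ∪ D r).ncard = (D q).ncard + (D r).ncard :=
      Set.ncard_union_eq hdisjqr (Set.toFinite _) (Set.toFinite _)
    have hchain : sN.card ≤ (t.filter (· ∈ D p)).card + t.card := by
      rw [hcount, ← hsum]
      exact Finset.sum_le_sum hfib
    omega
  -- pick two further uncovered vertices
  have h2 : 1 < ((M.vertsᶜ) \ {x₁}).ncard := by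
    have := Set.ncard_diff_singleton_of_mem hx₁
    omega
  obtain ⟨x₂, x₃, hx₂, hx₃, h23⟩ := (Set.one_lt_ncard_iff (Set.toFinite _)).mp h2
  obtain ⟨hx₂c, hx₂1⟩ := hx₂
  obtain ⟨hx₃c, hx₃1⟩ := hx₃
  have hx₂' : x₂ ∉ M.verts := hx₂c
  have hx₃' : x₃ ∉ M.verts := hx₃c
  have hx₂1' : x₁ ≠ x₂ := fun h => hx₂1 (by simp [h.symm])
  have hx₃1' : x₁ ≠ x₃ := fun h => hx₃1 (by simp [h.symm])
  have h23' : x₂ ≠ x₃ := h23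
  have hd1 : 1 ≤ (D x₁).ncard := by
    have hmem : s(u, v) ∈ D x₁ := by
      refine ⟨Subgraph.mem_edgeSet.mpr huv, ?_⟩
      intro z hz
      rcases Sym2.mem_iff.mp hz with rfl | rfl
      · exact hux₁.symm
      · exact hvx₁.symm
    exact (Set.ncard_pos (Set.toFinite _)).mpr ⟨_, hmem⟩
  have k1 := hkey x₁ x₂ x₃ hx₁' hx₂' hx₃' hx₂1' hx₃1' h23'
  have k2 := hkey x₂ x₁ x₃ hx₂' hx₁' hx₃' (Ne.symm hx₂1') h23' hx₃1'
  have k3 := hkey x₃ x₁ x₂ hx₃' hx₁' hx₂' (Ne.symm hx₃1') (Ne.symm h23') hx₂1'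
  omega
end

section
/- Let D be a digraph on n vertices, S ⊆ V(D), Q a closed directed trail with V(Q) ∩ S ≠ ∅, and s ∈ S − V(Q) with no arcs between s and V(Q). Suppose D is S-strong and Q is chosen with |V(Q) ∩ S| maximum. If every pair of nonadjacent vertices u, v ∈ S satisfies d(u) + d(v) ≥ 2n − 3, then there exist vertices x, y ∈ V(Q) and an (x,y)-directed path P in D through s, internally disjoint from Q except possibly one internal vertex used twice as a trail vertex, i.e., D contains an (x,y)-ditrail T through s with V(T) ∩ V(Q) = {x,y} in which at most one internal vertex t has d⁺_T(t) = d⁻_T(t) = 2 and all other internal vertices w have d⁺_T(w) = d⁻_T(w) = 1. -/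
section Helpers

variable {V : Type*}

theorem isDiwalk_iff_chain' (A : V → V → Prop) : ∀ l : List V, IsDiwalk A l ↔ l.Chain' A
  | [] => by simp [IsDiwalk, List.Chain']
  | [a] => by simp [IsDiwalk, List.Chain']
  | a :: b :: l => by
    simp only [IsDiwalk]
    rw [List.Chain', List.isChain_cons_cons, isDiwalk_iff_chain' A (b :: l), List.Chain']

theorem arcList_cons₂ (a b : V) (l : List V) :
    arcList (a :: b :: l) = (a, b) :: arcList (b :: l) := rfl

theorem map_fst_arcList : ∀ l : List V, (arcList l).map Prod.fst = l.dropLast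
  | [] => rfl
  | [_] => rfl
  | a :: b :: l => by
    rw [arcList_cons₂, List.map_cons, map_fst_arcList (b :: l)]
    rfl

theorem map_snd_arcList : ∀ l : List V, (arcList l).map Prod.snd = l.tail
  | [] => rfl
  | [_] => rfl
  | a :: b :: l => by
    rw [arcList_cons₂, List.map_cons, map_snd_arcList (b :: l)]
    rfl

theorem getLast?_append' (w l : List V) (h : l ≠ []) :
    (w ++ l).getLast? = l.getLast? := by
  rcases List.eq_nil_or_concat l with rfl | ⟨L, b, rfl⟩
  · exact absurd rfl h
  · rw [List.concat_eq_append, ← List.append_assoc, List.getLast?_concat, List.getLast?_concat]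

theorem mem_of_head?' {l : List V} {a : V} (h : l.head? = some a) : a ∈ l := by
  cases l <;> simp_all

theorem mem_of_getLast?' {l : List V} {a : V} (h : l.getLast? = some a) : a ∈ l := by
  induction l with
  | nil => simp at h
  | cons b t ih =>
    cases t with
    | nil => simp at h; simp [h]
    | cons c u =>
      rw [List.getLast?_cons_cons] at h
      exact List.mem_cons_of_mem _ (ih h)

theorem arcList_append_pair : ∀ (l : List V) (c a b : V), l.getLast? = some c →
    arcList (l ++ [a, b]) = arcList l ++ [(c, a), (a, b)]
  | [], c, a, b, h => by simp at h
  | [u], c, a, b, h => by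
    simp only [List.getLast?_singleton, Option.some.injEq] at h
    subst h
    rfl
  | u :: v :: t, c, a, b, h => by
    rw [List.getLast?_cons_cons] at h
    have ih := arcList_append_pair (v :: t) c a b h
    calc arcList ((u :: v :: t) ++ [a, b])
        = (u, v) :: arcList ((v :: t) ++ [a, b]) := rfl
      _ = (u, v) :: (arcList (v :: t) ++ [(c, a), (a, b)]) := by rw [ih]
      _ = arcList (u :: v :: t) ++ [(c, a), (a, b)] := rfl

theorem exists_good_suffix (Q : List V) :
    ∀ l : List V, (∃ v ∈ l, v ∈ Q) →
    ∃ x P, (x :: P) <:+ l ∧ x ∈ Q ∧ ∀ v ∈ P, v ∉ Q := by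
  intro l
  induction l with
  | nil => rintro ⟨v, hv, -⟩; simp at hv
  | cons a t ih =>
    intro h
    by_cases ht : ∃ v ∈ t, v ∈ Q
    · obtain ⟨x, P, hsuf, hx, hP⟩ := ih ht
      exact ⟨x, P, hsuf.trans (List.suffix_cons a t), hx, hP⟩
    · have haQ : a ∈ Q := by
        obtain ⟨v, hv, hvQ⟩ := h
        rcases List.mem_cons.mp hv with rfl | hvt
        · exact hvQ
        · exact absurd ⟨v, hvt, hvQ⟩ ht
      exact ⟨a, t, List.suffix_rfl, haQ, fun v hv hvQ => ht ⟨v, hv, hvQ⟩⟩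

theorem exists_good_prefix (Q : List V) :
    ∀ l : List V, (∃ v ∈ l, v ∈ Q) →
    ∃ y P, (P ++ [y]) <+: l ∧ y ∈ Q ∧ ∀ v ∈ P, v ∉ Q := by
  intro l
  induction l with
  | nil => rintro ⟨v, hv, -⟩; simp at hv
  | cons a t ih =>
    intro h
    by_cases haQ : a ∈ Q
    · exact ⟨a, [], ⟨t, rfl⟩, haQ, by simp⟩
    · have ht : ∃ v ∈ t, v ∈ Q := by
        obtain ⟨v, hv, hvQ⟩ := h
        rcases List.mem_cons.mp hv with rfl | hvt
        · exact absurd hvQ haQ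
        · exact ⟨v, hvt, hvQ⟩
      obtain ⟨y, P, hpre, hy, hP⟩ := ih ht
      obtain ⟨r, hr⟩ := hpre
      refine ⟨y, a :: P, ⟨r, by simp [hr]⟩, hy, ?_⟩
      rintro v hv
      rcases List.mem_cons.mp hv with rfl | hvP
      · exact haQ
      · exact hP v hvP

variable [DecidableEq V]

theorem filter_fst_eq_count (v : V) (L : List (V × V)) :
    (L.filter fun p => p.1 = v).length = (L.map Prod.fst).count v := by
  induction L with
  | nil => simp
  | cons a t ih =>
    by_cases h : a.1 = v <;>
      simp [List.filter_cons, h, List.count_cons, ih] <;> omega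

theorem filter_snd_eq_count (v : V) (L : List (V × V)) :
    (L.filter fun p => p.2 = v).length = (L.map Prod.snd).count v := by
  induction L with
  | nil => simp
  | cons a t ih =>
    by_cases h : a.2 = v <;>
      simp [List.filter_cons, h, List.count_cons, ih] <;> omega

theorem count_cons' (a b : V) (l : List V) :
    (b :: l).count a = l.count a + if a = b then 1 else 0 := by
  rw [List.count_cons]
  by_cases h : a = b
  · simp [h]
  · simp [h, Ne.symm h]

theorem count_nodup {l : List V} (h : l.Nodup) (v : V) :
    l.count v = if v ∈ l then 1 else 0 := by
  by_cases hv : v ∈ l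
  · simp [hv, List.count_eq_one_of_mem h hv]
  · simp [hv, List.count_eq_zero_of_not_mem hv]

theorem build (A : V → V → Prop) (Q : List V) (s x β q' : V) (P₀ : List V)
    (hsβ : A s β) (hβq' : A β q')
    (hsQ : s ∉ Q) (hxQ : x ∈ Q) (hq'Q : q' ∈ Q) (hβQ : β ∉ Q) (hβs : β ≠ s)
    (hnd : (x :: P₀).Nodup) (hwalk : IsDiwalk A (x :: P₀))
    (hlast : (x :: P₀).getLast? = some s)
    (hP₀Q : ∀ v ∈ P₀, v ∉ Q) :
    ∃ (x' y : V) (T : List V), x' ∈ Q ∧ y ∈ Q ∧ IsDitrail A T ∧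
      T.head? = some x' ∧ T.getLast? = some y ∧ s ∈ T ∧
      {v | v ∈ T ∧ v ∈ Q} = {x', y} ∧
      (∀ v ∈ T, v ≠ x' → v ≠ y →
        (((arcList T).filter fun p => p.1 = v).length = 1 ∧
         ((arcList T).filter fun p => p.2 = v).length = 1) ∨
        (((arcList T).filter fun p => p.1 = v).length = 2 ∧
         ((arcList T).filter fun p => p.2 = v).length = 2)) ∧
      (∀ v ∈ T, ∀ w ∈ T, v ≠ x' → v ≠ y → w ≠ x' → w ≠ y →
        ((arcList T).filter fun p => p.1 = v).length = 2 →
        ((arcList T).filter fun p => p.1 = w).length = 2 → v = w) := by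
  classical
  have hsx : s ≠ x := fun h => hsQ (h ▸ hxQ)
  have hsP : s ∈ x :: P₀ := mem_of_getLast?' hlast
  have hsP₀ : s ∈ P₀ := by
    rcases List.mem_cons.mp hsP with h | h
    · exact absurd h hsx
    · exact h
  have hxP₀ : x ∉ P₀ := (List.nodup_cons.mp hnd).1
  have hP₀nd : P₀.Nodup := (List.nodup_cons.mp hnd).2
  have hβx : β ≠ x := fun h => hβQ (h ▸ hxQ)
  have hβq'' : β ≠ q' := fun h => hβQ (h ▸ hq'Q)
  have hsq' : s ≠ q' := fun h => hsQ (h ▸ hq'Q)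
  have hq'P₀ : q' ∉ P₀ := fun h => hP₀Q q' h hq'Q
  have hPne : (x :: P₀) ≠ [] := by simp
  have hTassoc : (x :: P₀) ++ [β, q'] = ((x :: P₀) ++ [β]) ++ [q'] := by simp
  have harc : arcList ((x :: P₀) ++ [β, q']) = arcList (x :: P₀) ++ [(s, β), (β, q')] :=
    arcList_append_pair _ _ _ _ hlast
  have hdrop : ((x :: P₀) ++ [β, q']).dropLast = (x :: P₀) ++ [β] := by
    rw [hTassoc, List.dropLast_concat]
  have htail : ((x :: P₀) ++ [β, q']).tail = P₀ ++ [β, q'] := rfl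
  have hgetLastP : (x :: P₀).getLast hPne = s := by
    have h1 := List.getLast?_eq_getLast hPne
    rw [h1] at hlast
    exact Option.some.inj hlast
  have hPdecomp : (x :: P₀).dropLast ++ [s] = x :: P₀ := by
    conv_rhs => rw [← List.dropLast_append_getLast hPne]
    rw [hgetLastP]
  have hsdrop : s ∉ (x :: P₀).dropLast := by
    have hnd' : ((x :: P₀).dropLast ++ [s]).Nodup := by rw [hPdecomp]; exact hnd
    have hdj := (List.nodup_append'.mp hnd').2.2
    intro hmem
    exact hdj hmem (List.mem_singleton_self s)
  have harcndP : (arcList (x :: P₀)).Nodup := by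
    apply List.Nodup.of_map Prod.fst
    rw [map_fst_arcList]
    exact hnd.sublist (List.dropLast_sublist _)
  have houtc : ∀ v, ((arcList ((x :: P₀) ++ [β, q'])).filter fun p => p.1 = v).length
      = ((x :: P₀) ++ [β]).count v := by
    intro v
    rw [filter_fst_eq_count, map_fst_arcList, hdrop]
  have hinc : ∀ v, ((arcList ((x :: P₀) ++ [β, q'])).filter fun p => p.2 = v).length
      = (P₀ ++ [β, q']).count v := by
    intro v
    rw [filter_snd_eq_count, map_snd_arcList, htail]
  refine ⟨x, q', (x :: P₀) ++ [β, q'], hxQ, hq'Q, ⟨?_, ?_⟩, ?_, ?_, ?_, ?_, ?_, ?_⟩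
  · -- diwalk
    rw [isDiwalk_iff_chain', List.Chain', List.isChain_append]
    refine ⟨(isDiwalk_iff_chain' A _).mp hwalk, by simp [List.isChain_cons_cons, hβq'], ?_⟩
    intro a ha b hb
    rw [hlast] at ha
    have ha' : s = a := by simpa using ha
    have hb' : β = b := by simpa using hb
    rw [← ha', ← hb']
    exact hsβ
  · -- arc nodup
    rw [harc]
    refine harcndP.append ?_ ?_
    · simp only [List.nodup_cons, List.mem_singleton, List.nodup_nil, and_true, List.not_mem_nil,
        not_false_iff]
      intro h
      exact hβs (congrArg Prod.fst h).symm
    · intro p hp hp'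
      simp only [List.mem_cons, List.not_mem_nil, or_false, List.mem_singleton] at hp'
      rcases hp' with rfl | rfl
      · apply hsdrop
        have h1 : (s, β).1 ∈ (arcList (x :: P₀)).map Prod.fst := List.mem_map_of_mem hp
        rwa [map_fst_arcList] at h1
      · apply hq'P₀
        have h1 : (β, q').2 ∈ (arcList (x :: P₀)).map Prod.snd := List.mem_map_of_mem hp
        rwa [map_snd_arcList] at h1
  · -- head?
    simp
  · -- getLast?
    rw [hTassoc, List.getLast?_concat]
  · -- s mem
    exact List.mem_append.mpr (Or.inl hsP)
  · -- set equality
    ext v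
    simp only [Set.mem_setOf_eq, List.mem_append, List.mem_cons, List.not_mem_nil, or_false,
      List.mem_singleton, Set.mem_insert_iff, Set.mem_singleton_iff]
    constructor
    · rintro ⟨hvT, hvQ⟩
      rcases hvT with (rfl | hvP₀) | (rfl | rfl)
      · exact Or.inl rfl
      · exact absurd hvQ (hP₀Q v hvP₀)
      · exact absurd hvQ hβQ
      · exact Or.inr rfl
    · rintro (rfl | rfl)
      · exact ⟨Or.inl (Or.inl rfl), hxQ⟩
      · exact ⟨Or.inr (Or.inr rfl), hq'Q⟩
  · -- degree condition
    intro v hvT hvx hvy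
    rw [houtc, hinc]
    have hmem : (v = x ∨ v ∈ P₀) ∨ (v = β ∨ v = q') := by
      have := List.mem_append.mp hvT
      simpa using this
    by_cases hvβ : v = β
    · rw [hvβ]
      by_cases hβP₀ : β ∈ P₀
      · right
        constructor
        · rw [List.count_append, count_nodup hnd, if_pos (List.mem_cons_of_mem _ hβP₀)]
          simp [count_cons']
        · rw [List.count_append, count_nodup hP₀nd, if_pos hβP₀]
          simp [count_cons', hβq'']
      · left
        constructor
        · have hβP : β ∉ x :: P₀ := by
            intro h
            rcases List.mem_cons.mp h with h' | h'
            · exact hβx h'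
            · exact hβP₀ h'
          rw [List.count_append, count_nodup hnd, if_neg hβP]
          simp [count_cons']
        · rw [List.count_append, count_nodup hP₀nd, if_neg hβP₀]
          simp [count_cons', hβq'']
    · by_cases hvs : v = s
      · rw [hvs]
        left
        constructor
        · rw [List.count_append, count_nodup hnd, if_pos hsP]
          simp [count_cons', Ne.symm hβs]
        · rw [List.count_append, count_nodup hP₀nd, if_pos hsP₀]
          simp [count_cons', Ne.symm hβs, hsq']
      · have hvP₀ : v ∈ P₀ := by
          rcases hmem with (h | h) | (h | h)
          · exact absurd h hvx
          · exact h
          · exact absurd h hvβ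
          · exact absurd h hvy
        left
        constructor
        · rw [List.count_append, count_nodup hnd, if_pos (List.mem_cons_of_mem _ hvP₀)]
          simp [count_cons', hvβ]
        · rw [List.count_append, count_nodup hP₀nd, if_pos hvP₀]
          simp [count_cons', hvβ, hvy]
  · -- uniqueness
    intro v hv w hw hvx hvy hwx hwy h2v h2w
    have key : ∀ u, ((arcList ((x :: P₀) ++ [β, q'])).filter fun p => p.1 = u).length = 2 →
        u = β := by
      intro u h2
      by_contra huβ
      rw [houtc, List.count_append, count_nodup hnd] at h2
      have hc : [β].count u = 0 := by simp [count_cons', huβ]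
      rw [hc] at h2
      split at h2 <;> omega
    rw [key v h2v, key w h2w]

theorem build2 (A : V → V → Prop) (Q : List V) (s y α q' : V) (R₁ : List V)
    (hq'α : A q' α) (hαs : A α s)
    (hsQ : s ∉ Q) (hyQ : y ∈ Q) (hq'Q : q' ∈ Q) (hαQ : α ∉ Q) (hαs' : α ≠ s)
    (hnd : (s :: (R₁ ++ [y])).Nodup) (hwalk : IsDiwalk A (s :: (R₁ ++ [y])))
    (hR₁Q : ∀ v ∈ s :: R₁, v ∉ Q) :
    ∃ (x' y' : V) (T : List V), x' ∈ Q ∧ y' ∈ Q ∧ IsDitrail A T ∧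
      T.head? = some x' ∧ T.getLast? = some y' ∧ s ∈ T ∧
      {v | v ∈ T ∧ v ∈ Q} = {x', y'} ∧
      (∀ v ∈ T, v ≠ x' → v ≠ y' →
        (((arcList T).filter fun p => p.1 = v).length = 1 ∧
         ((arcList T).filter fun p => p.2 = v).length = 1) ∨
        (((arcList T).filter fun p => p.1 = v).length = 2 ∧
         ((arcList T).filter fun p => p.2 = v).length = 2)) ∧
      (∀ v ∈ T, ∀ w ∈ T, v ≠ x' → v ≠ y' → w ≠ x' → w ≠ y' →
        ((arcList T).filter fun p => p.1 = v).length = 2 →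
        ((arcList T).filter fun p => p.1 = w).length = 2 → v = w) := by
  classical
  have hsR : s ∉ R₁ ++ [y] := (List.nodup_cons.mp hnd).1
  have hndR : (R₁ ++ [y]).Nodup := (List.nodup_cons.mp hnd).2
  have hR₁nd : R₁.Nodup := (List.nodup_append.mp hndR).1
  have hyR₁ : y ∉ R₁ := fun h => (List.nodup_append'.mp hndR).2.2 h (List.mem_singleton_self y)
  have hsR₁ : s ∉ R₁ := fun h => hsR (List.mem_append.mpr (Or.inl h))
  have hsy : s ≠ y := fun h => hsQ (h ▸ hyQ)
  have hq's : q' ≠ s := fun h => hsQ (h ▸ hq'Q)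
  have hq'α' : q' ≠ α := fun h => hαQ (h ▸ hq'Q)
  have hαy : α ≠ y := fun h => hαQ (h ▸ hyQ)
  have hαq : α ≠ q' := fun h => hαQ (h ▸ hq'Q)
  have hndsR₁ : (s :: R₁).Nodup := List.nodup_cons.mpr ⟨hsR₁, hR₁nd⟩
  have hTassoc : (q' :: α :: s :: (R₁ ++ [y])) = (q' :: α :: s :: R₁) ++ [y] := by simp
  have hdrop : (q' :: α :: s :: (R₁ ++ [y])).dropLast = q' :: α :: s :: R₁ := by
    rw [hTassoc, List.dropLast_concat]
  have hlastR : (s :: (R₁ ++ [y])).getLast? = some y := by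
    rw [show s :: (R₁ ++ [y]) = (s :: R₁) ++ [y] from rfl, List.getLast?_concat]
  have hdropR : (s :: (R₁ ++ [y])).dropLast = s :: R₁ := by
    rw [show s :: (R₁ ++ [y]) = (s :: R₁) ++ [y] from rfl, List.dropLast_concat]
  have harc : arcList (q' :: α :: s :: (R₁ ++ [y]))
      = (q', α) :: (α, s) :: arcList (s :: (R₁ ++ [y])) := rfl
  have harcndR : (arcList (s :: (R₁ ++ [y]))).Nodup := by
    apply List.Nodup.of_map Prod.fst
    rw [map_fst_arcList, hdropR]
    exact hndsR₁
  have houtc : ∀ v, ((arcList (q' :: α :: s :: (R₁ ++ [y]))).filter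
      fun p => p.1 = v).length = (q' :: α :: s :: R₁).count v := by
    intro v
    rw [filter_fst_eq_count, map_fst_arcList, hdrop]
  have hinc : ∀ v, ((arcList (q' :: α :: s :: (R₁ ++ [y]))).filter
      fun p => p.2 = v).length = (α :: s :: (R₁ ++ [y])).count v := by
    intro v
    rw [filter_snd_eq_count, map_snd_arcList]
    rfl
  refine ⟨q', y, q' :: α :: s :: (R₁ ++ [y]), hq'Q, hyQ, ⟨?_, ?_⟩, ?_, ?_, ?_, ?_, ?_, ?_⟩
  · -- diwalk
    rw [isDiwalk_iff_chain', List.Chain', List.isChain_cons_cons, List.isChain_cons_cons]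
    exact ⟨hq'α, hαs, (isDiwalk_iff_chain' A _).mp hwalk⟩
  · -- arc nodup
    rw [harc]
    refine List.nodup_cons.mpr ⟨?_, List.nodup_cons.mpr ⟨?_, harcndR⟩⟩
    · intro h
      rcases List.mem_cons.mp h with h' | h'
      · exact hq'α' (congrArg Prod.fst h')
      · have h1 : (q', α).1 ∈ (arcList (s :: (R₁ ++ [y]))).map Prod.fst :=
          List.mem_map_of_mem h'
        rw [map_fst_arcList, hdropR] at h1
        exact hR₁Q q' h1 hq'Q
    · intro h
      have h1 : (α, s).2 ∈ (arcList (s :: (R₁ ++ [y]))).map Prod.snd :=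
        List.mem_map_of_mem h
      rw [map_snd_arcList] at h1
      exact hsR h1
  · -- head?
    simp
  · -- getLast?
    rw [hTassoc, List.getLast?_concat]
  · -- s mem
    exact List.mem_cons_of_mem _ (List.mem_cons_of_mem _ List.mem_cons_self)
  · -- set equality
    ext v
    simp only [Set.mem_setOf_eq, List.mem_cons, List.mem_append, List.not_mem_nil, or_false,
      List.mem_singleton, Set.mem_insert_iff, Set.mem_singleton_iff]
    constructor
    · rintro ⟨hvT, hvQ⟩
      rcases hvT with rfl | rfl | rfl | hvR₁ | rfl
      · exact Or.inl rfl
      · exact absurd hvQ hαQ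
      · exact absurd hvQ hsQ
      · exact absurd hvQ (hR₁Q v (List.mem_cons_of_mem _ hvR₁))
      · exact Or.inr rfl
    · rintro (rfl | rfl)
      · exact ⟨by simp, hq'Q⟩
      · exact ⟨by simp, hyQ⟩
  · -- degree condition
    intro v hvT hvx hvy
    rw [houtc, hinc]
    have hmem : v = q' ∨ v = α ∨ v = s ∨ v ∈ R₁ ∨ v = y := by
      have := List.mem_cons.mp hvT
      simpa using this
    by_cases hvα : v = α
    · rw [hvα]
      by_cases hαR₁ : α ∈ R₁
      · right
        constructor
        · rw [count_cons', count_cons', count_cons', count_nodup hR₁nd, if_pos hαR₁]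
          simp [hαq, hαs']
        · rw [count_cons', count_nodup (List.nodup_cons.mpr ⟨hsR, hndR⟩),
            if_pos (List.mem_cons_of_mem _ (List.mem_append.mpr (Or.inl hαR₁)))]
          simp
      · left
        constructor
        · rw [count_cons', count_cons', count_cons', count_nodup hR₁nd, if_neg hαR₁]
          simp [hαq, hαs']
        · have hαsR : α ∉ s :: (R₁ ++ [y]) := by
            intro h
            rcases List.mem_cons.mp h with h' | h'
            · exact hαs' h'
            · rcases List.mem_append.mp h' with h'' | h''
              · exact hαR₁ h''
              · exact hαy (List.mem_singleton.mp h'')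
          rw [count_cons', count_nodup (List.nodup_cons.mpr ⟨hsR, hndR⟩), if_neg hαsR]
          simp
    · by_cases hvs : v = s
      · rw [hvs]
        left
        constructor
        · rw [count_cons', count_cons', count_cons', count_nodup hR₁nd, if_neg hsR₁]
          simp [Ne.symm hq's, Ne.symm hαs']
        · rw [count_cons', count_nodup (List.nodup_cons.mpr ⟨hsR, hndR⟩),
            if_pos List.mem_cons_self]
          simp [Ne.symm hαs']
      · have hvR₁ : v ∈ R₁ := by
          rcases hmem with h | h | h | h | h
          · exact absurd h hvx
          · exact absurd h hvα
          · exact absurd h hvs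
          · exact h
          · exact absurd h hvy
        left
        constructor
        · rw [count_cons', count_cons', count_cons', count_nodup hR₁nd, if_pos hvR₁]
          simp [hvx, hvα, hvs]
        · rw [count_cons', count_nodup (List.nodup_cons.mpr ⟨hsR, hndR⟩),
            if_pos (List.mem_cons_of_mem _ (List.mem_append.mpr (Or.inl hvR₁)))]
          simp [hvα]
  · -- uniqueness
    intro v hv w hw hvx hvy hwx hwy h2v h2w
    have key : ∀ u, u ≠ q' →
        ((arcList (q' :: α :: s :: (R₁ ++ [y]))).filter fun p => p.1 = u).length = 2 →
        u = α := by
      intro u huq h2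
      by_contra huα
      rw [houtc, count_cons', count_cons', count_cons', count_nodup hR₁nd] at h2
      simp only [if_neg huq, if_neg huα, add_zero] at h2
      by_cases hus : u = s
      · rw [if_neg (show u ∉ R₁ by rw [hus]; exact hsR₁), if_pos hus] at h2
        omega
      · rw [if_neg hus] at h2
        split at h2 <;> omega
    rw [key v hvx h2v, key w hwx h2w]

end Helpers

/-- with `Q` a maximal closed ditrail meeting `S`, `s ∈ S` outside `Q`
with no arcs to `Q`, `D` `S`-strong and the degree condition, there is an `(x,y)`-ditrail
through `s` meeting `Q` only in `x, y`, in which at most one internal vertex is visited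
twice (in/out trail-degree 2) and all other internal vertices once. -/
theorem stmt_18 {V : Type*} [Fintype V] [DecidableEq V] (n : ℕ)
    (hn : Fintype.card V = n)
    (A : V → V → Prop) (hirr : ∀ v, ¬ A v v) (S : Set V) (Q : List V) (s : V)
    (hQ : IsClosedDitrail A Q) (hmeet : ∃ v ∈ S, v ∈ Q)
    (hs : s ∈ S) (hsQ : s ∉ Q)
    (hnoarc : ∀ w ∈ Q, ¬ A s w ∧ ¬ A w s)
    (hmaxQ : ∀ Q' : List V, IsClosedDitrail A Q' →
      {v | v ∈ S ∧ v ∈ Q'}.ncard ≤ {v | v ∈ S ∧ v ∈ Q}.ncard)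
    (hstrong : ∀ u ∈ S, ∀ v ∈ S, u ≠ v → DiReach A u v)
    (hdeg : ∀ u ∈ S, ∀ v ∈ S, u ≠ v → ¬ A u v → ¬ A v u →
      2 * n - 3 ≤ ({w | A u w}.ncard + {w | A w u}.ncard) +
        ({w | A v w}.ncard + {w | A w v}.ncard)) :
    ∃ (x y : V) (T : List V), x ∈ Q ∧ y ∈ Q ∧ IsDitrail A T ∧
      T.head? = some x ∧ T.getLast? = some y ∧ s ∈ T ∧
      {v | v ∈ T ∧ v ∈ Q} = {x, y} ∧
      (∀ v ∈ T, v ≠ x → v ≠ y →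
        (((arcList T).filter fun p => p.1 = v).length = 1 ∧
         ((arcList T).filter fun p => p.2 = v).length = 1) ∨
        (((arcList T).filter fun p => p.1 = v).length = 2 ∧
         ((arcList T).filter fun p => p.2 = v).length = 2)) ∧
      (∀ v ∈ T, ∀ w ∈ T, v ≠ x → v ≠ y → w ≠ x → w ≠ y →
        ((arcList T).filter fun p => p.1 = v).length = 2 →
        ((arcList T).filter fun p => p.1 = w).length = 2 → v = w) := by
  classical
  obtain ⟨q, hqS, hqQ⟩ := hmeet
  have hsq : s ≠ q := fun h => hsQ (h ▸ hqQ)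
  by_cases hcase1 : ∃ β, A s β ∧ ∃ w ∈ Q, A β w
  · obtain ⟨β, hsβ, q', hq'Q, hβq'⟩ := hcase1
    have hβQ : β ∉ Q := fun h => (hnoarc β h).1 hsβ
    have hβs : β ≠ s := fun h => hirr s (h ▸ hsβ)
    obtain ⟨l, hlw, hlnd, hlh, hll⟩ := hstrong q hqS s hs (Ne.symm hsq)
    obtain ⟨x, P₀, hsuf, hxQ, hP₀Q⟩ := exists_good_suffix Q l ⟨q, mem_of_head?' hlh, hqQ⟩
    obtain ⟨w₀, hw₀⟩ := hsuf
    have hPnd : (x :: P₀).Nodup := hlnd.sublist (List.IsSuffix.sublist ⟨w₀, hw₀⟩)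
    have hPwalk : IsDiwalk A (x :: P₀) := by
      rw [isDiwalk_iff_chain']
      rw [isDiwalk_iff_chain'] at hlw
      rw [← hw₀] at hlw
      exact (List.isChain_append.mp hlw).2.1
    have hPlast : (x :: P₀).getLast? = some s := by
      rw [← hw₀] at hll
      rwa [getLast?_append' _ _ (by simp)] at hll
    exact build A Q s x β q' P₀ hsβ hβq' hsQ hxQ hq'Q hβQ hβs hPnd hPwalk hPlast hP₀Q
  · by_cases hcase2 : ∃ α, A α s ∧ ∃ w ∈ Q, A w α
    · obtain ⟨α, hαs, q', hq'Q, hq'α⟩ := hcase2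
      have hαQ : α ∉ Q := fun h => (hnoarc α h).2 hαs
      have hαs' : α ≠ s := fun h => hirr s (h ▸ hαs)
      obtain ⟨l, hlw, hlnd, hlh, hll⟩ := hstrong s hs q hqS hsq
      obtain ⟨y, R₀, hpre, hyQ, hR₀Q⟩ := exists_good_prefix Q l ⟨q, mem_of_getLast?' hll, hqQ⟩
      obtain ⟨rest, hrest⟩ := hpre
      cases R₀ with
      | nil =>
        exfalso
        rw [← hrest] at hlh
        simp at hlh
        exact hsQ (hlh ▸ hyQ)
      | cons r R₁ =>
        have hr : r = s := by
          rw [← hrest] at hlh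
          simp at hlh
          exact hlh
        have heq : (s :: (R₁ ++ [y])) ++ rest = l := by rw [← hr]; exact hrest
        have hR₁Q' : ∀ v ∈ s :: R₁, v ∉ Q := by rw [← hr]; exact hR₀Q
        have hnd2 : (s :: (R₁ ++ [y])).Nodup := by
          have := hlnd.sublist (List.IsPrefix.sublist ⟨rest, heq⟩)
          simpa using this
        have hwalk2 : IsDiwalk A (s :: (R₁ ++ [y])) := by
          rw [isDiwalk_iff_chain']
          rw [isDiwalk_iff_chain'] at hlw
          rw [← heq] at hlw
          have := (List.isChain_append.mp hlw).1
          simpa [List.Chain'] using this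
        exact build2 A Q s y α q' R₁ hq'α hαs hsQ hyQ hq'Q hαQ hαs' hnd2 hwalk2 hR₁Q'
    · exfalso
      push_neg at hcase1 hcase2
      have hAsq : ¬ A s q := (hnoarc q hqQ).1
      have hAqs : ¬ A q s := (hnoarc q hqQ).2
      have hdeg' := hdeg s hs q hqS hsq hAsq hAqs
      have hn2 : 2 ≤ n := by
        rw [← hn]
        exact Fintype.one_lt_card_iff_nontrivial.mpr ⟨s, q, hsq⟩
      have hd1 : Disjoint {w | A q w} {w | A w s} :=
        Set.disjoint_left.mpr fun w hw1 hw2 => hcase2 w hw2 q hqQ hw1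
      have hs1 : {w | A q w} ∪ {w | A w s} ⊆ Set.univ \ {s, q} := by
        intro w hw
        rcases hw with hw | hw
        · refine ⟨trivial, ?_⟩
          intro hmem
          simp only [Set.mem_insert_iff, Set.mem_singleton_iff] at hmem
          rcases hmem with h | h
          · exact hAqs (h ▸ hw)
          · exact hirr q (h ▸ hw)
        · refine ⟨trivial, ?_⟩
          intro hmem
          simp only [Set.mem_insert_iff, Set.mem_singleton_iff] at hmem
          rcases hmem with h | h
          · exact hirr s (h ▸ hw)
          · exact hAqs (h ▸ hw)
      have hcard : (Set.univ \ {s, q} : Set V).ncard = n - 2 := by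
        rw [Set.ncard_diff (Set.subset_univ _), Set.ncard_univ, Nat.card_eq_fintype_card, hn,
          Set.ncard_pair hsq]
      have hb1 : {w | A q w}.ncard + {w | A w s}.ncard ≤ n - 2 := by
        have e1 := Set.ncard_union_eq hd1 (Set.toFinite _) (Set.toFinite _)
        have e2 := Set.ncard_le_ncard hs1 (Set.toFinite _)
        omega
      have hd2 : Disjoint {w | A w q} {w | A s w} :=
        Set.disjoint_left.mpr fun w hw1 hw2 => hcase1 w hw2 q hqQ hw1
      have hs2 : {w | A w q} ∪ {w | A s w} ⊆ Set.univ \ {s, q} := by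
        intro w hw
        rcases hw with hw | hw
        · refine ⟨trivial, ?_⟩
          intro hmem
          simp only [Set.mem_insert_iff, Set.mem_singleton_iff] at hmem
          rcases hmem with h | h
          · exact hAsq (h ▸ hw)
          · exact hirr q (h ▸ hw)
        · refine ⟨trivial, ?_⟩
          intro hmem
          simp only [Set.mem_insert_iff, Set.mem_singleton_iff] at hmem
          rcases hmem with h | h
          · exact hirr s (h ▸ hw)
          · exact hAsq (h ▸ hw)
      have hb2 : {w | A w q}.ncard + {w | A s w}.ncard ≤ n - 2 := by
        have e1 := Set.ncard_union_eq hd2 (Set.toFinite _) (Set.toFinite _)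
        have e2 := Set.ncard_le_ncard hs2 (Set.toFinite _)
        omega
      omega
end
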